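/- arXiv:1705.07277 — 3 statements merged into one kernel-verified Lean document; each statement's English description precedes it below -/
import Mathlib

section
/- Let β > 1 with β ∉ ℕ, n ∈ ℕ, and let w ∈ Σ_β^n end with a prefix of ε(1,β), i.e., w = w₁⋯w_{n−s}ε₁⋯ε_s for some 1 ≤ s ≤ n. Then in the lexicographic ordering of Σ_β^n, the τ_β(s) consecutive words ending at w (that is, w and the τ_β(s) − 1 words immediately preceding it) are all non-full, while the word immediately preceding these τ_β(s) words is full. -/
noncomputable def Tb (β x : ℝ) : ℝ := β * x - ⌊β * x⌋

/-- The (i+1)-th digit of the β-expansion of x (0-indexed). -/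
noncomputable def dig (β x : ℝ) (i : ℕ) : ℕ := (⌊β * (Tb β)^[i] x⌋).toNat

/-- w is an admissible word for base β. -/
def Adm (β : ℝ) (w : List ℕ) : Prop :=
  ∃ x, x ∈ Set.Ico (0:ℝ) 1 ∧ ∀ i (h : i < w.length), w[i] = dig β x i

/-- u is an admissible digit sequence for base β. -/
def AdmSeq (β : ℝ) (u : ℕ → ℕ) : Prop :=
  ∃ x, x ∈ Set.Ico (0:ℝ) 1 ∧ ∀ i, u i = dig β x i

/-- The cylinder I(w) ⊆ [0,1). -/
def cyl (β : ℝ) (w : List ℕ) : Set ℝ :=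
  {x | x ∈ Set.Ico (0:ℝ) 1 ∧ ∀ i (h : i < w.length), w[i] = dig β x i}

/-- w is a full word: T_β^{|w|} maps I(w) onto [0,1). -/
def Full (β : ℝ) (w : List ℕ) : Prop :=
  (Tb β)^[w.length] '' cyl β w = Set.Ico 0 1

/-- The β-expansion of 1 is finite with length M. -/
def FiniteLen (β : ℝ) (M : ℕ) : Prop :=
  0 < M ∧ dig β 1 (M-1) ≠ 0 ∧ ∀ j, M ≤ j → dig β 1 j = 0

open Classical in
/-- The (i+1)-th digit of the modified β-expansion ε*(1,β) (0-indexed). -/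
noncomputable def modExp (β : ℝ) (i : ℕ) : ℕ :=
  if h : ∃ M, FiniteLen β M then
    (if (i+1) % (Nat.find h) = 0 then dig β 1 (Nat.find h - 1) - 1
     else dig β 1 (i % Nat.find h))
  else dig β 1 i

/-- View a finite word as the sequence w0^∞. -/
def wordSeq (w : List ℕ) (i : ℕ) : ℕ := w.getD i 0

/-- Strict lexicographic order on sequences. -/
def seqLt (u v : ℕ → ℕ) : Prop := ∃ k, (∀ i, i < k → u i = v i) ∧ u k < v k

/-- Strict lexicographic order on finite words (identified with w0^∞). -/
def wlt (u v : List ℕ) : Prop := seqLt (wordSeq u) (wordSeq v)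

/-- Concatenation of a finite word with a sequence. -/
def catSeq (w : List ℕ) (u : ℕ → ℕ) (i : ℕ) : ℕ :=
  if h : i < w.length then w[i] else u (i - w.length)

open Classical in
/-- The largest position k ≤ s with ε_k ≠ 0 (greedy step). -/
noncomputable def greedyStep (β : ℝ) (s : ℕ) : ℕ :=
  Nat.findGreatest (fun k => 1 ≤ k ∧ dig β 1 (k-1) ≠ 0) s

/-- τ_β(s): number of terms in the greedy representation of s by nonzero positions. -/
noncomputable def tau (β : ℝ) : ℕ → ℕ
  | 0 => 0
  | s + 1 => tau β (s - (greedyStep β (s+1) - 1)) + 1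
decreasing_by omega

open Classical in
/-- r_s(β): maximal length of a string of 0's in ε₁*⋯ε_s*. -/
noncomputable def rrun (β : ℝ) (s : ℕ) : ℕ :=
  Nat.findGreatest (fun k => 1 ≤ k ∧ ∃ i, i + k ≤ s ∧ ∀ t, t < k → modExp β (i + t) = 0) s

/-- v is the immediate successor of u in the lexicographic order on Σ_β^n. -/
def SuccIn (β : ℝ) (n : ℕ) (u v : List ℕ) : Prop :=
  u.length = n ∧ v.length = n ∧ Adm β u ∧ Adm β v ∧ wlt u v ∧
  ¬ ∃ z : List ℕ, z.length = n ∧ Adm β z ∧ wlt u z ∧ wlt z v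

/-- There is a run of l consecutive non-full words in Σ_β^n. -/
def NonFullRun (β : ℝ) (n l : ℕ) : Prop :=
  ∃ f : ℕ → List ℕ,
    (∀ j, j < l → (f j).length = n ∧ Adm β (f j) ∧ ¬ Full β (f j)) ∧
    (∀ j, j + 1 < l → SuccIn β n (f j) (f (j+1)))

/-- There is a maximal run of l consecutive non-full words in Σ_β^n. -/
def MaxNonFullRun (β : ℝ) (n l : ℕ) : Prop :=
  0 < l ∧ ∃ f : ℕ → List ℕ,
    (∀ j, j < l → (f j).length = n ∧ Adm β (f j) ∧ ¬ Full β (f j)) ∧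
    (∀ j, j + 1 < l → SuccIn β n (f j) (f (j+1))) ∧
    (∀ u, SuccIn β n u (f 0) → Full β u) ∧
    (∀ u, SuccIn β n (f (l-1)) u → Full β u)

/-- There is a maximal run of l consecutive full words in Σ_β^n. -/
def MaxFullRun (β : ℝ) (n l : ℕ) : Prop :=
  0 < l ∧ ∃ f : ℕ → List ℕ,
    (∀ j, j < l → (f j).length = n ∧ Adm β (f j) ∧ Full β (f j)) ∧
    (∀ j, j + 1 < l → SuccIn β n (f j) (f (j+1))) ∧
    (∀ u, SuccIn β n u (f 0) → ¬ Full β u) ∧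
    (∀ u, SuccIn β n (f (l-1)) u → ¬ Full β u)

/-- The canonical decomposition of an admissible word, as in the structure theorem:
p.1 is the list of block lengths k₁,…,k_p and p.2 is the final length l. -/
def Decomp (β : ℝ) (w : List ℕ) (p : List ℕ × ℕ) : Prop :=
  1 ≤ p.2 ∧ (∀ k ∈ p.1, 1 ≤ k) ∧ p.1.sum + p.2 = w.length ∧
  (∀ j, j < p.1.length →
    (∀ t, t < p.1.getD j 0 - 1 → w.getD ((p.1.take j).sum + t) 0 = dig β 1 t) ∧
    w.getD ((p.1.take j).sum + (p.1.getD j 0 - 1)) 0 < dig β 1 (p.1.getD j 0 - 1)) ∧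
  (∀ t, t < p.2 - 1 → w.getD (p.1.sum + t) 0 = dig β 1 t) ∧
  w.getD (p.1.sum + (p.2 - 1)) 0 ≤ dig β 1 (p.2 - 1)

namespace S15

noncomputable def ee (β : ℝ) (m : ℕ) : ℝ := (Tb β)^[m] 1
noncomputable def ed (β : ℝ) (m : ℕ) : ℕ := dig β 1 m

noncomputable def val (β : ℝ) (w : List ℕ) : ℝ := w.foldl (fun (a : ℝ) (d : ℕ) => β * a + d) 0

variable {β : ℝ}

lemma Tb_eq_fract (x : ℝ) : Tb β x = Int.fract (β * x) := rfl

lemma Tb_nonneg (x : ℝ) : 0 ≤ Tb β x := by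
  rw [Tb_eq_fract]; exact Int.fract_nonneg _

lemma Tb_lt_one (x : ℝ) : Tb β x < 1 := by
  rw [Tb_eq_fract]; exact Int.fract_lt_one _

lemma iter_Tb_nonneg {k : ℕ} (x : ℝ) (hx : 0 ≤ x) : 0 ≤ (Tb β)^[k] x := by
  cases k with
  | zero => simpa
  | succ k => rw [Function.iterate_succ_apply']; exact Tb_nonneg _

lemma iter_Tb_lt_one {k : ℕ} (x : ℝ) (hx : x < 1) : (Tb β)^[k] x < 1 := by
  cases k with
  | zero => simpa
  | succ k => rw [Function.iterate_succ_apply']; exact Tb_lt_one _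

lemma ee_zero : ee β 0 = 1 := rfl

lemma ee_nonneg (m : ℕ) : 0 ≤ ee β m := iter_Tb_nonneg 1 zero_le_one

lemma ee_lt_one {m : ℕ} (hm : 1 ≤ m) : ee β m < 1 := by
  cases m with
  | zero => omega
  | succ m => rw [ee, Function.iterate_succ_apply']; exact Tb_lt_one _

lemma ee_le_one (m : ℕ) : ee β m ≤ 1 := by
  cases m with
  | zero => simp [ee_zero]
  | succ m => exact le_of_lt (ee_lt_one (Nat.succ_le_succ (Nat.zero_le m)))

lemma ed_cast (hβ : 1 < β) (m : ℕ) : (ed β m : ℝ) = ⌊β * ee β m⌋ := by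
  have h : (0:ℤ) ≤ ⌊β * ee β m⌋ := Int.floor_nonneg.mpr (mul_nonneg (by linarith) (ee_nonneg m))
  rw [ed, dig]
  show ((⌊β * ee β m⌋.toNat : ℕ) : ℝ) = (⌊β * ee β m⌋ : ℝ)
  exact_mod_cast congrArg (Int.cast : ℤ → ℝ) (Int.toNat_of_nonneg h)

lemma ee_succ (hβ : 1 < β) (m : ℕ) : ee β (m+1) = β * ee β m - ed β m := by
  rw [ee, Function.iterate_succ_apply', Tb, ed_cast hβ]; rfl

lemma ed_bounds (hβ : 1 < β) (m : ℕ) :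
    (ed β m : ℝ) ≤ β * ee β m ∧ β * ee β m < ed β m + 1 := by
  rw [ed_cast hβ]
  exact ⟨Int.floor_le _, Int.lt_floor_add_one _⟩

lemma ed_zero_pos (hβ : 1 < β) : 1 ≤ ed β 0 := by
  have h := (ed_bounds hβ 0).2
  have h0 : β * ee β 0 = β := by rw [ee_zero, mul_one]
  by_contra h1
  push_neg at h1
  have h2 : ed β 0 = 0 := by omega
  rw [h2, h0] at h; push_cast at h; linarith

lemma ee_eq_zero_succ {m : ℕ} (hβ : 1 < β) (h : ee β m = 0) : ee β (m+1) = 0 := by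
  have hd : ed β m = 0 := by
    have := ed_cast hβ (β := β) m
    rw [h, mul_zero] at this
    exact_mod_cast by rw [ed, dig]; rw [ee] at h; rw [h, mul_zero]; simp
  rw [ee_succ hβ, h, hd]; simp

lemma ee_pos_of_le {m s : ℕ} (hβ : 1 < β) (hms : m ≤ s) (hs : 0 < ee β s) : 0 < ee β m := by
  by_contra h
  push_neg at h
  have h0 : ee β m = 0 := le_antisymm h (ee_nonneg m)
  have : ∀ j, ee β (m + j) = 0 := by
    intro j; induction j with
    | zero => simpa
    | succ j ih => rw [← Nat.add_assoc]; exact ee_eq_zero_succ hβ ih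
  have := this (s - m)
  rw [Nat.add_sub_cancel' hms] at this
  rw [this] at hs; exact lt_irrefl 0 hs

end S15
namespace S15
variable {β : ℝ}

lemma val_nil : val β [] = 0 := rfl

lemma foldl_val (c : ℝ) (w : List ℕ) :
    w.foldl (fun (a : ℝ) (d : ℕ) => β * a + d) c = c * β ^ w.length + val β w := by
  induction w generalizing c with
  | nil => simp [val]
  | cons d t ih =>
    simp only [List.foldl_cons, List.length_cons, val]
    rw [ih (β * c + d), ih (β * 0 + d)]
    ring

lemma val_cons (d : ℕ) (t : List ℕ) : val β (d :: t) = d * β ^ t.length + val β t := by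
  rw [val, List.foldl_cons, foldl_val]; ring

lemma val_append (a b : List ℕ) :
    val β (a ++ b) = val β a * β ^ b.length + val β b := by
  rw [val, List.foldl_append, foldl_val]; rfl

lemma val_singleton (d : ℕ) : val β [d] = d := by
  rw [val_cons, val_nil]; simp

lemma val_nonneg (hβ : 1 < β) (w : List ℕ) : 0 ≤ val β w := by
  induction w with
  | nil => simp [val_nil]
  | cons d t ih =>
    rw [val_cons]
    have : (0:ℝ) ≤ β ^ t.length := by positivity
    positivity

lemma val_replicate_zero (m : ℕ) : val β (List.replicate m 0) = 0 := by
  induction m with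
  | zero => rfl
  | succ m ih => rw [List.replicate_succ, val_cons]; simp [ih]

lemma val_take_drop (w : List ℕ) (k : ℕ) (h : k ≤ w.length) :
    val β w = val β (w.take k) * β ^ (w.length - k) + val β (w.drop k) := by
  conv_lhs => rw [← List.take_append_drop k w]
  rw [val_append, List.length_drop]

noncomputable def epf (β : ℝ) (m : ℕ) : List ℕ := List.ofFn (fun i : Fin m => ed β i)

@[simp] lemma epf_length (m : ℕ) : (epf β m).length = m := by simp [epf]

lemma val_block (hβ : 1 < β) (j m : ℕ) :
    val β (List.ofFn fun i : Fin m => ed β (j + i)) = β ^ m * ee β j - ee β (j + m) := by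
  induction m with
  | zero => simp [val_nil, List.ofFn_zero]
  | succ m ih =>
    rw [List.ofFn_succ', List.concat_eq_append, val_append]
    simp only [Fin.coe_castSucc, Fin.val_last, List.length_singleton, val_singleton]
    rw [ih, pow_one]
    have h1 : ee β (j + (m+1)) = β * ee β (j+m) - ed β (j+m) := ee_succ hβ (j+m)
    rw [h1, pow_succ]
    ring

lemma val_epf (hβ : 1 < β) (m : ℕ) : val β (epf β m) = β ^ m - ee β m := by
  have : epf β m = List.ofFn fun i : Fin m => ed β (0 + i) := by
    unfold epf; congr 1; funext i; rw [Nat.zero_add]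
  rw [this, val_block hβ, ee_zero, Nat.zero_add, mul_one]

lemma epf_split (k m : ℕ) (h : k ≤ m) :
    epf β m = epf β k ++ List.ofFn (fun i : Fin (m - k) => ed β (k + i)) := by
  have hm : m = k + (m - k) := by omega
  rw [epf]
  conv_lhs => rw [hm]
  rw [List.ofFn_add]
  congr 1

lemma epf_take (k m : ℕ) (h : k ≤ m) : (epf β m).take k = epf β k := by
  rw [epf_split k m h, List.take_left' (by simp)]

lemma epf_drop (k m : ℕ) (h : k ≤ m) :
    (epf β m).drop k = List.ofFn (fun i : Fin (m - k) => ed β (k + i)) := by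
  rw [epf_split k m h, List.drop_left' (by simp)]

lemma val_epf_drop (hβ : 1 < β) (k m : ℕ) (h : k ≤ m) :
    val β ((epf β m).drop k) = β ^ (m - k) * ee β k - ee β m := by
  rw [epf_drop k m h, val_block hβ]
  congr 2
  omega

lemma epf_zeros (g m : ℕ) (h : g ≤ m) (hz : ∀ t, g ≤ t → t < m → ed β t = 0) :
    epf β m = epf β g ++ List.replicate (m - g) 0 := by
  rw [epf_split g m h]
  congr 1
  apply List.ext_getElem (by simp)
  intro i h1 h2
  simp only [List.getElem_ofFn, List.getElem_replicate]
  exact hz _ (Nat.le_add_right _ _) (by simp at h1; omega)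

lemma epf_succ (m : ℕ) : epf β (m+1) = epf β m ++ [ed β m] := by
  rw [epf, List.ofFn_succ', List.concat_eq_append]
  rfl

end S15
namespace S15
variable {β : ℝ}

def good (β : ℝ) (w : List ℕ) (x : ℝ) : Prop :=
  0 ≤ x ∧ x < 1 ∧ ∀ k, k ≤ w.length →
    val β (w.take k) ≤ β ^ k * x ∧ β ^ k * x < val β (w.take k) + 1

lemma pow_split (hβ : 1 < β) {k n : ℕ} (h : k ≤ n) : β ^ n = β ^ k * β ^ (n - k) := by
  rw [← pow_add]; congr 1; omega

lemma take_succ_eq (w : List ℕ) (k : ℕ) (h : k < w.length) :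
    w.take (k+1) = w.take k ++ [w[k]] := by
  rw [← List.take_concat_get h, List.concat_eq_append]

lemma val_take_succ (w : List ℕ) (k : ℕ) (h : k < w.length) :
    val β (w.take (k+1)) = β * val β (w.take k) + w[k] := by
  rw [take_succ_eq w k h, val_append, val_singleton, List.length_singleton, pow_one]
  ring

lemma iter_affine (hβ : 1 < β) {w : List ℕ} {x : ℝ} (hx : x ∈ cyl β w) :
    ∀ k, k ≤ w.length → (Tb β)^[k] x = β ^ k * x - val β (w.take k) := by
  obtain ⟨⟨hx0, hx1⟩, hd⟩ := hx
  intro k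
  induction k with
  | zero => intro _; simp [val_nil]
  | succ k ih =>
    intro hk1
    have hk : k < w.length := by omega
    have ihk := ih (by omega)
    rw [Function.iterate_succ_apply', Tb, ihk]
    have hTnn : (0:ℝ) ≤ β ^ k * x - val β (w.take k) := by
      rw [← ihk]; exact iter_Tb_nonneg x hx0
    have hfl : ((w[k] : ℕ) : ℝ) = (⌊β * (β ^ k * x - val β (w.take k))⌋ : ℤ) := by
      have hdig := hd k hk
      rw [hdig, dig, ← ihk]
      have h0 : (0:ℤ) ≤ ⌊β * (Tb β)^[k] x⌋ :=
        Int.floor_nonneg.mpr (mul_nonneg (by linarith) (iter_Tb_nonneg x hx0))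
      exact_mod_cast congrArg (Int.cast : ℤ → ℝ) (Int.toNat_of_nonneg h0)
    rw [← hfl, val_take_succ w k hk, pow_succ]
    ring

lemma good_of_mem_cyl (hβ : 1 < β) {w : List ℕ} {x : ℝ} (hx : x ∈ cyl β w) :
    good β w x := by
  obtain ⟨⟨hx0, hx1⟩, hd⟩ := hx
  refine ⟨hx0, hx1, fun k hk => ?_⟩
  have haff := iter_affine hβ ⟨⟨hx0, hx1⟩, hd⟩ k hk
  have h0 : 0 ≤ (Tb β)^[k] x := iter_Tb_nonneg x hx0
  have h1 : (Tb β)^[k] x < 1 := iter_Tb_lt_one x hx1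
  rw [haff] at h0 h1
  constructor <;> linarith

lemma mem_cyl_of_good (hβ : 1 < β) {w : List ℕ} {x : ℝ} (hg : good β w x) :
    x ∈ cyl β w := by
  obtain ⟨hx0, hx1, hb⟩ := hg
  have key : ∀ k, k ≤ w.length →
      (Tb β)^[k] x = β ^ k * x - val β (w.take k) ∧ ∀ i, i < k → ∀ (h : i < w.length), w[i] = dig β x i := by
    intro k
    induction k with
    | zero => intro _; exact ⟨by simp [val_nil], fun i hi => by omega⟩
    | succ k ih =>
      intro hk1
      have hk : k < w.length := by omega
      obtain ⟨hT, hdig⟩ := ih (by omega)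
      have hb1 := hb (k+1) hk1
      rw [val_take_succ w k hk] at hb1
      have hβT : β * (Tb β)^[k] x = β ^ (k+1) * x - β * val β (w.take k) := by
        rw [hT, pow_succ]; ring
      have hfloor : ⌊β * (Tb β)^[k] x⌋ = (w[k] : ℤ) := by
        rw [Int.floor_eq_iff]
        rw [hβT]
        push_cast
        constructor <;> [linarith [hb1.1]; linarith [hb1.2]]
      have hdigk : w[k] = dig β x k := by
        rw [dig, hfloor]; simp
      refine ⟨?_, fun i hi h' => ?_⟩
      · rw [Function.iterate_succ_apply', Tb, hfloor, hβT, val_take_succ w k hk]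
        push_cast
        ring
      · rcases Nat.lt_or_ge i k with h2 | h2
        · exact hdig i h2 h'
        · have : i = k := by omega
          subst this; exact hdigk
  exact ⟨⟨hx0, hx1⟩, fun i hi => (key w.length le_rfl).2 i hi hi⟩

lemma lt_of_wlt_cyl (hβ : 1 < β) {p q : List ℕ} {x y : ℝ} (hl : p.length = q.length)
    (h : wlt p q) (hx : x ∈ cyl β p) (hy : y ∈ cyl β q) : x < y := by
  obtain ⟨k, hpre, hk⟩ := h
  have hkq : k < q.length := by
    by_contra hc
    push_neg at hc
    have : wordSeq q k = 0 := by
      rw [wordSeq, List.getD_eq_default]; omega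
    omega
  have hkp : k < p.length := by omega
  have hpk : wordSeq p k = p[k] := List.getD_eq_getElem p 0 hkp
  have hqk : wordSeq q k = q[k] := List.getD_eq_getElem q 0 hkq
  have htk : p.take k = q.take k := by
    apply List.ext_getElem (by simp [hl])
    intro i h1 h2
    have hik : i < k := by simp at h1; omega
    have := hpre i hik
    rw [wordSeq, wordSeq, List.getD_eq_getElem p 0 (by omega), List.getD_eq_getElem q 0 (by omega)] at this
    simpa using this
  have gp := (good_of_mem_cyl hβ hx).2.2 (k+1) (by omega)
  have gq := (good_of_mem_cyl hβ hy).2.2 (k+1) (by omega)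
  rw [val_take_succ p k hkp] at gp
  rw [val_take_succ q k hkq] at gq
  have hcast : (p[k] : ℝ) + 1 ≤ (q[k] : ℝ) := by
    rw [hpk, hqk] at hk
    exact_mod_cast hk
  have hβk : (0:ℝ) < β ^ (k+1) := by positivity
  have : β ^ (k+1) * x < β ^ (k+1) * y := by
    calc β ^ (k+1) * x < β * val β (p.take k) + p[k] + 1 := by linarith [gp.2]
    _ ≤ β * val β (q.take k) + q[k] := by rw [htk]; linarith
    _ ≤ β ^ (k+1) * y := gq.1
  exact lt_of_mul_lt_mul_left this (le_of_lt hβk)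

lemma betak_mul_div (hβ : 1 < β) (w : List ℕ) {k : ℕ} (h : k ≤ w.length) (c : ℝ) :
    β ^ k * ((val β w + c) / β ^ w.length)
      = val β (w.take k) + (val β (w.drop k) + c) / β ^ (w.length - k) := by
  have h1 := val_take_drop (β := β) w k h
  have h2 : β ^ w.length = β ^ k * β ^ (w.length - k) := pow_split hβ h
  have hp : (0:ℝ) < β ^ w.length := by positivity
  have hpk : (0:ℝ) < β ^ (w.length - k) := by positivity
  field_simp
  rw [h1, h2]
  ring

lemma mem_cyl_self (hβ : 1 < β) (w : List ℕ)
    (hA : ∀ k, k ≤ w.length → val β (w.drop k) < β ^ (w.length - k)) :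
    val β w / β ^ w.length ∈ cyl β w := by
  apply mem_cyl_of_good hβ
  have hp : (0:ℝ) < β ^ w.length := by positivity
  refine ⟨div_nonneg (val_nonneg hβ w) (le_of_lt hp), ?_, fun k hk => ?_⟩
  · rw [div_lt_one hp]
    simpa using hA 0 (Nat.zero_le _)
  · have key : β ^ k * (val β w / β ^ w.length)
        = val β (w.take k) + (val β (w.drop k) + 0) / β ^ (w.length - k) := by
      have := betak_mul_div hβ w hk 0
      simpa using this
    rw [key]
    have hpk : (0:ℝ) < β ^ (w.length - k) := by positivity
    have h0 : 0 ≤ val β (w.drop k) := val_nonneg hβ _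
    have h1 := hA k hk
    constructor
    · have : 0 ≤ (val β (w.drop k) + 0) / β ^ (w.length - k) := by positivity
      linarith
    · have : (val β (w.drop k) + 0) / β ^ (w.length - k) < 1 := by
        rw [div_lt_one hpk]; linarith
      linarith

end S15
namespace S15
variable {β : ℝ}

lemma cyl_eq_Ico (hβ : 1 < β) (w : List ℕ)
    (hF : ∀ k, k ≤ w.length → val β (w.drop k) ≤ β ^ (w.length - k) - 1) (hn : 0 < w.length) :
    cyl β w = Set.Ico (val β w / β ^ w.length) ((val β w + 1) / β ^ w.length) := by
  have hp : (0:ℝ) < β ^ w.length := by positivity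
  ext x
  constructor
  · intro hx
    have hg := (good_of_mem_cyl hβ hx).2.2 w.length le_rfl
    rw [List.take_length] at hg
    constructor
    · rw [div_le_iff₀ hp]; linarith [hg.1]
    · rw [lt_div_iff₀ hp]; linarith [hg.2]
  · rintro ⟨hx1, hx2⟩
    apply mem_cyl_of_good hβ
    have hw0 : 0 ≤ val β w := val_nonneg hβ w
    have hF0 := hF 0 (Nat.zero_le _)
    simp only [List.drop_zero, Nat.sub_zero] at hF0
    refine ⟨le_trans (div_nonneg hw0 hp.le) hx1, ?_, fun k hk => ?_⟩
    · have : (val β w + 1) / β ^ w.length ≤ 1 := by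
        rw [div_le_one hp]; linarith
      linarith
    · have hpk : (0:ℝ) < β ^ (w.length - k) := by positivity
      have hβk : (0:ℝ) < β ^ k := by positivity
      have key0 : β ^ k * (val β w / β ^ w.length)
          = val β (w.take k) + (val β (w.drop k) + 0) / β ^ (w.length - k) := by
        have h := betak_mul_div hβ w hk 0
        rw [add_zero] at h
        exact h
      have key1 : β ^ k * ((val β w + 1) / β ^ w.length)
          = val β (w.take k) + (val β (w.drop k) + 1) / β ^ (w.length - k) :=
        betak_mul_div hβ w hk 1
      have hd0 : 0 ≤ val β (w.drop k) := val_nonneg hβ _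
      have hdF := hF k hk
      have hxl : val β (w.take k) + (val β (w.drop k) + 0) / β ^ (w.length - k) ≤ β ^ k * x := by
        rw [← key0]
        exact mul_le_mul_of_nonneg_left hx1 hβk.le
      have hxu : β ^ k * x < val β (w.take k) + (val β (w.drop k) + 1) / β ^ (w.length - k) := by
        rw [← key1]
        exact (mul_lt_mul_iff_right₀ hβk).mpr hx2
      constructor
      · have : 0 ≤ (val β (w.drop k) + 0) / β ^ (w.length - k) := by positivity
        linarith
      · have : (val β (w.drop k) + 1) / β ^ (w.length - k) ≤ 1 := by
          rw [div_le_one hpk]; linarith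
        linarith

lemma full_of_bounds (hβ : 1 < β) (w : List ℕ) (hn : 0 < w.length)
    (hF : ∀ k, k ≤ w.length → val β (w.drop k) ≤ β ^ (w.length - k) - 1) : Full β w := by
  have hp : (0:ℝ) < β ^ w.length := by positivity
  have hIco := cyl_eq_Ico hβ w hF hn
  rw [Full]
  ext t
  simp only [Set.mem_image]
  constructor
  · rintro ⟨x, hx, rfl⟩
    have haff := iter_affine hβ hx w.length le_rfl
    rw [List.take_length] at haff
    rw [hIco] at hx
    obtain ⟨hx1, hx2⟩ := hx
    rw [div_le_iff₀ hp] at hx1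
    rw [lt_div_iff₀ hp] at hx2
    rw [haff]
    constructor <;> [linarith [hx1]; linarith [hx2]]
  · intro ht
    obtain ⟨ht1, ht2⟩ := ht
    have hx : (t + val β w) / β ^ w.length ∈ cyl β w := by
      rw [hIco]
      constructor
      · rw [div_le_div_iff₀ hp hp]; nlinarith
      · rw [div_lt_div_iff₀ hp hp]; nlinarith
    refine ⟨(t + val β w) / β ^ w.length, hx, ?_⟩
    have haff := iter_affine hβ hx w.length le_rfl
    rw [List.take_length] at haff
    rw [haff, mul_div_cancel₀ _ hp.ne']
    ring

end S15
namespace S15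
variable {β : ℝ}

lemma notFull_of_eps_suffix (hβ : 1 < β) (a : List ℕ) {t : ℕ} (ht : 1 ≤ t) :
    ¬ Full β (a ++ epf β t) := by
  intro hFull
  set w := a ++ epf β t with hw
  have hlen : w.length = a.length + t := by simp [hw]
  have hmem : ee β t ∈ Set.Ico (0:ℝ) 1 := ⟨ee_nonneg t, ee_lt_one ht⟩
  rw [Full] at hFull
  rw [← hFull] at hmem
  obtain ⟨x, hx, hTx⟩ := hmem
  have haff := iter_affine hβ hx w.length le_rfl
  rw [List.take_length] at haff
  have hg := (good_of_mem_cyl hβ hx).2.2 a.length (by omega)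
  have hta : w.take a.length = a := by
    rw [hw, List.take_left]
  rw [hta] at hg
  have hvw : val β w = val β a * β ^ t + (β ^ t - ee β t) := by
    rw [hw, val_append, epf_length, val_epf hβ]
  have hpt : (0:ℝ) < β ^ t := by positivity
  have hsplit : β ^ w.length = β ^ t * β ^ a.length := by
    rw [← pow_add]; congr 1; omega
  have hup := hg.2
  have : (Tb β)^[w.length] x < ee β t := by
    rw [haff, hvw, hsplit]
    nlinarith [hup]
  rw [hTx] at this
  exact lt_irrefl _ this

lemma cyl_nonempty_adm {w : List ℕ} {x : ℝ} (hx : x ∈ cyl β w) : Adm β w :=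
  ⟨x, hx.1, hx.2⟩

lemma succ_pack (hβ : 1 < β) {n : ℕ} {a b : List ℕ} (ha : a.length = n) (hb : b.length = n)
    (hAb : ∀ k, k ≤ n → val β (b.drop k) < β ^ (n - k))
    {c : ℝ} (hc : 0 < c) (hvb : val β b = val β a + c)
    (hBa : ∀ k, k ≤ n → val β (a.drop k) + c ≤ β ^ (n - k))
    (hlt : wlt a b) : SuccIn β n a b := by
  have hpn : (0:ℝ) < β ^ n := by positivity
  have hAa : ∀ k, k ≤ a.length → val β (a.drop k) < β ^ (a.length - k) := by
    intro k hk
    rw [ha]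
    have := hBa k (by omega)
    linarith
  have hLa : val β a / β ^ a.length ∈ cyl β a := mem_cyl_self hβ a hAa
  have hLb : val β b / β ^ b.length ∈ cyl β b := by
    apply mem_cyl_self hβ b
    intro k hk
    rw [hb]
    exact hAb k (by omega)
  refine ⟨ha, hb, cyl_nonempty_adm hLa, cyl_nonempty_adm hLb, hlt, ?_⟩
  rintro ⟨z, hzlen, hzadm, hz1, hz2⟩
  obtain ⟨y, hy1, hy2⟩ := hzadm
  have hycyl : y ∈ cyl β z := ⟨hy1, hy2⟩
  set Lb := val β b / β ^ b.length with hLbdef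
  have hylt : y < Lb := lt_of_wlt_cyl hβ (by omega) hz2 hycyl hLb
  -- construct a point of cyl a above y
  set t := min (Lb - y) (c / β ^ n) / 2 with htdef
  have htpos : 0 < t := by
    apply div_pos _ two_pos
    apply lt_min
    · linarith
    · positivity
  have ht1 : t ≤ (Lb - y) / 2 := by
    have := min_le_left (Lb - y) (c / β ^ n)
    rw [htdef]; linarith
  have ht2 : t ≤ c / β ^ n / 2 := by
    have := min_le_right (Lb - y) (c / β ^ n)
    rw [htdef]; linarith
  set x := Lb - t with hxdef
  have hxy : y < x := by rw [hxdef]; linarith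
  have hLbval : Lb = (val β a + c) / β ^ n := by rw [hLbdef, hb, hvb]
  have hcb : c / β ^ n ≤ Lb := by
    rw [hLbval]
    gcongr
    linarith [val_nonneg hβ a]
  have hLb1 : Lb < 1 := by
    rw [hLbdef, hb, div_lt_one hpn]
    simpa using hAb 0 (Nat.zero_le n)
  have hxcyl : x ∈ cyl β a := by
    apply mem_cyl_of_good hβ
    refine ⟨by rw [hxdef]; linarith, by rw [hxdef]; linarith, fun k hk => ?_⟩
    have hkn : k ≤ n := by omega
    have key := betak_mul_div hβ a hk c
    rw [ha] at key
    have hpk : (0:ℝ) < β ^ k := by positivity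
    have hpnk : (0:ℝ) < β ^ (n - k) := by positivity
    have hsplit : β ^ n = β ^ k * β ^ (n - k) := pow_split hβ hkn
    have hbkx : β ^ k * x = val β (a.take k) + (val β (a.drop k) + c) / β ^ (n - k) - β ^ k * t := by
      rw [hxdef, hLbval, mul_sub, key]
    have hbt : β ^ k * t ≤ c / β ^ (n - k) / 2 := by
      have h1 : β ^ k * t ≤ β ^ k * (c / β ^ n / 2) :=
        mul_le_mul_of_nonneg_left ht2 hpk.le
      have h2 : β ^ k * (c / β ^ n / 2) = c / β ^ (n - k) / 2 := by
        rw [hsplit]; field_simp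
      linarith
    have hdnn : 0 ≤ val β (a.drop k) := val_nonneg hβ _
    have hlow : c / β ^ (n - k) ≤ (val β (a.drop k) + c) / β ^ (n - k) := by
      gcongr
      linarith
    have hcdiv : 0 < c / β ^ (n - k) := by positivity
    have hup : (val β (a.drop k) + c) / β ^ (n - k) ≤ 1 := by
      rw [div_le_one hpnk]
      exact hBa k hkn
    have hbtpos : 0 < β ^ k * t := by positivity
    constructor
    · rw [hbkx]; linarith
    · rw [hbkx]; linarith
  have hxlty : x < y := lt_of_wlt_cyl hβ (by omega) hz1 hxcyl hycyl
  linarith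

end S15
namespace S15
variable {β : ℝ}

lemma dig_one_zero_ne (hβ : 1 < β) : dig β 1 (1-1) ≠ 0 := by
  intro h
  have h2 := ed_zero_pos hβ (β := β)
  rw [show ed β 0 = dig β 1 (1-1) from rfl, h] at h2
  omega

lemma greedy_pos (hβ : 1 < β) {s : ℕ} (hs : 1 ≤ s) : 1 ≤ greedyStep β s := by
  unfold greedyStep
  exact Nat.le_findGreatest hs ⟨le_rfl, dig_one_zero_ne hβ⟩

lemma greedy_le (s : ℕ) : greedyStep β s ≤ s := Nat.findGreatest_le s

lemma greedy_spec (hβ : 1 < β) {s : ℕ} (hs : 1 ≤ s) : ed β (greedyStep β s - 1) ≠ 0 := by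
  unfold greedyStep
  have := Nat.findGreatest_spec (P := fun k => 1 ≤ k ∧ dig β 1 (k-1) ≠ 0) (m := 1) hs
    ⟨le_rfl, dig_one_zero_ne hβ⟩
  exact this.2

lemma greedy_zeros (hβ : 1 < β) {s : ℕ} (hs : 1 ≤ s) :
    ∀ t, greedyStep β s ≤ t → t < s → ed β t = 0 := by
  intro t h1 h2
  by_contra hne
  have hgg : greedyStep β s < t + 1 := by omega
  have := Nat.findGreatest_is_greatest (P := fun k => 1 ≤ k ∧ dig β 1 (k-1) ≠ 0)
    (n := s) (k := t + 1) hgg (by omega)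
  exact this ⟨by omega, by simpa [ed] using hne⟩

lemma ee_run (hβ : 1 < β) {g m : ℕ} (hg : g ≤ m) (hz : ∀ t, g ≤ t → t < m → ed β t = 0) :
    ee β m = β ^ (m - g) * ee β g := by
  have key : ∀ r, (∀ t, g ≤ t → t < g + r → ed β t = 0) → ee β (g + r) = β ^ r * ee β g := by
    intro r
    induction r with
    | zero => intro _; simp
    | succ r ih =>
      intro hz'
      rw [← Nat.add_assoc, ee_succ hβ]
      rw [ih (fun t ht1 ht2 => hz' t ht1 (by omega))]
      have : ed β (g + r) = 0 := hz' _ (by omega) (by omega)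
      rw [this, pow_succ]
      push_cast
      ring
  have h2 := key (m - g) (fun t ht1 ht2 => hz t ht1 (by omega))
  rw [Nat.add_sub_cancel' hg] at h2
  exact h2

lemma tau_rec (hβ : 1 < β) {s : ℕ} (hs : 1 ≤ s) :
    tau β s = tau β (s - greedyStep β s) + 1 := by
  obtain ⟨m, rfl⟩ : ∃ m, s = m + 1 := ⟨s - 1, by omega⟩
  rw [tau]
  congr 2
  have := greedy_pos hβ hs
  omega

end S15
namespace S15
variable {β : ℝ}

lemma getD_append_lt (a b : List ℕ) (i : ℕ) (h : i < a.length) :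
    (a ++ b).getD i 0 = a.getD i 0 := by
  rw [List.getD_eq_getElem (a ++ b) 0 (by simp; omega), List.getD_eq_getElem a 0 h,
    List.getElem_append_left]

lemma getD_append_self (a : List ℕ) (d : ℕ) (r : List ℕ) :
    (a ++ (d :: r)).getD a.length 0 = d := by
  have h : a.length < (a ++ (d :: r)).length := by simp
  rw [List.getD_eq_getElem _ 0 h, List.getElem_append_right (Nat.le_refl a.length)]
  simp

lemma step_facts (hβ : 1 < β) (u : List ℕ) (s n : ℕ) (hs1 : 1 ≤ s) (hsn : s ≤ n)
    (hu : u.length + s = n)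
    (hA : ∀ k, k ≤ n → val β ((u ++ epf β s).drop k) < β ^ (n - k)) :
    ∃ w' : List ℕ,
      w' = (u ++ (epf β (greedyStep β s - 1) ++ [ed β (greedyStep β s - 1) - 1]))
             ++ epf β (s - greedyStep β s) ∧
      w'.length = n ∧
      0 < ee β (s - greedyStep β s) ∧
      val β (u ++ epf β s) = val β w' + ee β (s - greedyStep β s) ∧
      (∀ k, k ≤ n → val β (w'.drop k) + ee β (s - greedyStep β s) ≤ β ^ (n - k)) ∧
      wlt w' (u ++ epf β s) ∧
      (∀ k, k ≤ n → val β (w'.drop k) < β ^ (n - k)) := by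
  have hβ0 : (0:ℝ) < β := by linarith
  have hg1 : 1 ≤ greedyStep β s := greedy_pos hβ hs1
  have hgs : greedyStep β s ≤ s := greedy_le s
  set g := greedyStep β s with hgdef
  set s' := s - g with hs'def
  have hedg : ed β (g - 1) ≠ 0 := greedy_spec hβ hs1
  have hz : ∀ t, g ≤ t → t < s → ed β t = 0 := greedy_zeros hβ hs1
  set P : List ℕ := epf β (g - 1) ++ [ed β (g - 1) - 1] with hPdef
  set w' : List ℕ := (u ++ P) ++ epf β s' with hw'def
  have hPlen : P.length = g := by
    rw [hPdef, List.length_append, epf_length, List.length_singleton]; omega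
  have hw'len : w'.length = n := by
    rw [hw'def, List.length_append, List.length_append, epf_length, hPlen]; omega
  have hes : 0 < ee β s := by
    have hd := hA (n - s) (by omega)
    have he : (u ++ epf β s).drop (n - s) = epf β s := by
      rw [show n - s = u.length from by omega]
      exact List.drop_left
    rw [he, val_epf hβ, show n - (n - s) = s from by omega] at hd
    linarith
  have hes' : 0 < ee β s' := ee_pos_of_le hβ (by omega) hes
  have hrun : ee β s = β ^ s' * ee β g := by
    rw [hs'def]; exact ee_run hβ hgs hz
  have hcast : ((ed β (g-1) - 1 : ℕ) : ℝ) = (ed β (g-1) : ℝ) - 1 := by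
    have h1 : 1 ≤ ed β (g-1) := by omega
    push_cast [h1]
    ring
  have heeg : ee β g = β * ee β (g-1) - ed β (g-1) := by
    have h := ee_succ hβ (g-1)
    rw [show g - 1 + 1 = g from by omega] at h
    exact h
  have hgg : β ^ (g-1) * β = β ^ g := by
    rw [← pow_succ]; congr 1; omega
  have hPval : val β P = β ^ g - ee β g - 1 := by
    rw [hPdef, val_append, List.length_singleton, pow_one, val_epf hβ, val_singleton, hcast, heeg]
    linear_combination hgg
  have hgss' : β ^ g * β ^ s' = β ^ s := by
    rw [← pow_add]; congr 1; omega
  have hvalw : val β (u ++ epf β s) = val β u * β ^ s + β ^ s - ee β s := by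
    rw [val_append, epf_length, val_epf hβ]; ring
  have hvPT : val β (P ++ epf β s') = β ^ s - ee β s - ee β s' := by
    rw [val_append, epf_length, hPval, val_epf hβ, hrun]
    linear_combination hgss'
  have hPTlen : (P ++ epf β s').length = s := by simp [hPlen]; omega
  have hvalw' : val β w' = val β u * β ^ s + β ^ s - ee β s - ee β s' := by
    rw [hw'def, List.append_assoc, val_append, hPTlen, hvPT]
    ring
  -- the B bounds
  have hBB : ∀ k, k ≤ n → val β (w'.drop k) + ee β s' ≤ β ^ (n - k) := by
    intro k hk
    rcases le_or_gt (n - s') k with hcase | hcase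
    · -- inside the epsilon tail
      set j := k - (n - s') with hjdef
      have hjs : j ≤ s' := by omega
      have hd : w'.drop k = (epf β s').drop j := by
        rw [hw'def, List.drop_append,
          List.drop_eq_nil_of_le (by rw [List.length_append, hPlen]; omega), List.nil_append,
          show k - (u ++ P).length = j from by rw [List.length_append, hPlen]; omega]
      rw [hd, val_epf_drop hβ _ _ hjs, show n - k = s' - j from by omega]
      have h1 := ee_le_one (β := β) j
      have h2 : (0:ℝ) < β ^ (s' - j) := by positivity
      nlinarith [ee_nonneg (β := β) j]
    · rcases le_or_gt u.length k with hcase2 | hcase2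
      · -- inside the P block
        set j := k - u.length with hjdef
        have hjg : j ≤ g - 1 := by omega
        have hq : w' = (u ++ epf β (g-1)) ++ ((ed β (g-1) - 1) :: epf β s') := by
          rw [hw'def, hPdef]
          simp [List.append_assoc]
        have hqlen : (u ++ epf β (g-1)).length = u.length + (g-1) := by simp
        have hd : w'.drop k = (epf β (g-1)).drop j ++ ((ed β (g-1) - 1) :: epf β s') := by
          rw [hq, List.drop_append,
            show k - (u ++ epf β (g-1)).length = 0 from by rw [hqlen]; omega, List.drop_zero]
          congr 1
          rw [List.drop_append, List.drop_eq_nil_of_le (by omega),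
            List.nil_append]
        have hpow : β ^ (g-1-j) * β ^ (s'+1) = β ^ (n-k) := by
          rw [← pow_add]; congr 1; omega
        have hval : val β (w'.drop k) + ee β s' = β ^ (n-k) * ee β j - ee β s := by
          rw [hd, val_append, val_cons, val_epf_drop hβ j (g-1) hjg, val_epf hβ,
            List.length_cons, epf_length, hcast, hrun, heeg, ← hpow]
          ring
        rw [hval]
        have h1 := ee_le_one (β := β) j
        have h2 : (0:ℝ) < β ^ (n - k) := by positivity
        nlinarith [ee_nonneg (β := β) s, hrun, hes]
      · -- inside u
        have hd : w'.drop k = u.drop k ++ (P ++ epf β s') := by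
          rw [hw'def, List.append_assoc, List.drop_append,
            show k - u.length = 0 from by omega, List.drop_zero]
        have hdw : (u ++ epf β s).drop k = u.drop k ++ epf β s := by
          rw [List.drop_append, show k - u.length = 0 from by omega,
            List.drop_zero]
        have hkey : val β (w'.drop k) + ee β s' = val β ((u ++ epf β s).drop k) := by
          rw [hd, hdw]
          rw [val_append (a := u.drop k) (b := P ++ epf β s'), hPTlen, hvPT]
          rw [val_append (a := u.drop k) (b := epf β s), epf_length, val_epf hβ]
          ring
        rw [hkey]
        exact le_of_lt (hA k hk)
  have hweq : u ++ epf β s = (u ++ epf β (g-1)) ++ (ed β (g-1) :: List.replicate s' 0) := by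
    have h1 : epf β g = epf β (g-1) ++ [ed β (g-1)] := by
      have h := epf_succ (β := β) (g-1)
      rw [show g - 1 + 1 = g from by omega] at h
      exact h
    rw [epf_zeros g s hgs hz, h1]
    simp [List.append_assoc, hs'def]
  have hq : w' = (u ++ epf β (g-1)) ++ ((ed β (g-1) - 1) :: epf β s') := by
    rw [hw'def, hPdef]
    simp [List.append_assoc]
  have hwlt : wlt w' (u ++ epf β s) := by
    refine ⟨(u ++ epf β (g-1)).length, fun i hi => ?_, ?_⟩
    · rw [wordSeq, wordSeq, hweq, hq, getD_append_lt _ _ i hi, getD_append_lt _ _ i hi]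
    · rw [wordSeq, wordSeq, hweq, hq, getD_append_self, getD_append_self]
      omega
  exact ⟨w', rfl, hw'len, hes', by rw [hvalw, hvalw']; ring, hBB, hwlt,
    fun k hk => by have := hBB k hk; linarith⟩

end S15
namespace S15
variable {β : ℝ}

lemma tau_zero : tau β 0 = 0 := by rw [tau]

lemma main (hβ : 1 < β) : ∀ s, 1 ≤ s → ∀ n u, s ≤ n → u.length + s = n →
    (∀ k, k ≤ n → val β ((u ++ epf β s).drop k) < β ^ (n - k)) →
    ∃ f : ℕ → List ℕ, f 0 = u ++ epf β s ∧
      (∀ j, j ≤ tau β s → (f j).length = n ∧ Adm β (f j)) ∧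
      (∀ j, j < tau β s → SuccIn β n (f (j+1)) (f j)) ∧
      (∀ j, j < tau β s → ¬ Full β (f j)) ∧
      Full β (f (tau β s)) := by
  intro s
  induction s using Nat.strong_induction_on with
  | _ s IH =>
    intro hs1 n u hsn hu hA
    obtain ⟨w', hw'eq, hw'len, hes', hval, hBB, hwlt, hA'⟩ := step_facts hβ u s n hs1 hsn hu hA
    set g := greedyStep β s with hgdef
    have hg1 : 1 ≤ g := greedy_pos hβ hs1
    have hgs : g ≤ s := greedy_le s
    have htau : tau β s = tau β (s - g) + 1 := tau_rec hβ hs1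
    set w := u ++ epf β s with hwdef
    have hwlen : w.length = n := by rw [hwdef, List.length_append, epf_length]; omega
    have hAw : ∀ k, k ≤ w.length → val β (w.drop k) < β ^ (w.length - k) := by
      rw [hwlen]; exact hA
    have hAdm_w : Adm β w := cyl_nonempty_adm (mem_cyl_self hβ w hAw)
    have hAw' : ∀ k, k ≤ w'.length → val β (w'.drop k) < β ^ (w'.length - k) := by
      rw [hw'len]; exact hA'
    have hAdm_w' : Adm β w' := cyl_nonempty_adm (mem_cyl_self hβ w' hAw')
    have hnotFull_w : ¬ Full β w := notFull_of_eps_suffix hβ u hs1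
    have hSucc : SuccIn β n w' w :=
      succ_pack hβ hw'len hwlen hA hes' hval hBB hwlt
    rcases Nat.eq_zero_or_pos (s - g) with h0 | hpos
    · -- base case : one step, w' is full
      refine ⟨fun j => if j = 0 then w else w', rfl, ?_, ?_, ?_, ?_⟩
      · intro j hj
        by_cases hj0 : j = 0
        · simp [hj0]; exact ⟨hwlen, hAdm_w⟩
        · simp [hj0]; exact ⟨hw'len, hAdm_w'⟩
      · intro j hj
        rw [htau, h0, tau_zero] at hj
        have hj0 : j = 0 := by omega
        subst hj0
        simpa using hSucc
      · intro j hj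
        rw [htau, h0, tau_zero] at hj
        have hj0 : j = 0 := by omega
        subst hj0
        simpa using hnotFull_w
      · have htau1 : tau β s = 1 := by rw [htau, h0, tau_zero]
        rw [htau1]
        simp only [one_ne_zero, if_false]
        apply full_of_bounds hβ w' (by omega)
        intro k hk
        have hb := hBB k (by omega)
        rw [h0, ee_zero] at hb
        rw [hw'len]
        linarith
    · -- recursive case
      have hrec := IH (s - g) (by omega) hpos n (u ++ (epf β (g-1) ++ [ed β (g-1) - 1]))
        (by omega) (by rw [List.length_append, List.length_append, epf_length,
          List.length_singleton]; omega) (by rw [← hw'eq]; exact hA')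
      obtain ⟨f', hf0, hf1, hf2, hf3, hf4⟩ := hrec
      have hf0' : f' 0 = w' := by rw [hf0, ← hw'eq]
      refine ⟨fun j => if j = 0 then w else f' (j - 1), rfl, ?_, ?_, ?_, ?_⟩
      · intro j hj
        by_cases hj0 : j = 0
        · simp [hj0]; exact ⟨hwlen, hAdm_w⟩
        · simp only [hj0, if_false]
          exact hf1 (j - 1) (by omega)
      · intro j hj
        by_cases hj0 : j = 0
        · subst hj0
          simpa [hf0'] using hSucc
        · have e1 : (if j + 1 = 0 then w else f' (j + 1 - 1)) = f' (j - 1 + 1) := by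
            rw [if_neg (by omega : ¬ (j + 1 = 0))]
            congr 1
            omega
          have e2 : (if j = 0 then w else f' (j - 1)) = f' (j - 1) := if_neg hj0
          show SuccIn β n (if j + 1 = 0 then w else f' (j + 1 - 1)) (if j = 0 then w else f' (j - 1))
          rw [e1, e2]
          exact hf2 (j - 1) (by omega)
      · intro j hj
        by_cases hj0 : j = 0
        · simpa [hj0] using hnotFull_w
        · simp only [hj0, if_false]
          exact hf3 (j - 1) (by omega)
      · show Full β (if tau β s = 0 then w else f' (tau β s - 1))
        rw [htau, if_neg (by omega : ¬ (tau β (s - g) + 1 = 0)), Nat.add_sub_cancel]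
        exact hf4

end S15
/-- if w ∈ Σ_β^n ends with the prefix ε₁⋯ε_s of ε(1,β), then the
τ_β(s) consecutive words ending at w are all non-full while the word
immediately preceding them is full. -/
theorem stmt15 (β : ℝ) (hβ : 1 < β) (hβn : ∀ m : ℕ, β ≠ m) (n s : ℕ)
    (hs1 : 1 ≤ s) (hsn : s ≤ n) (w u : List ℕ) (hw : w.length = n)
    (hdec : w = u ++ List.ofFn (fun i : Fin s => dig β 1 i)) (hadm : Adm β w) :
    ∃ f : ℕ → List ℕ, f 0 = w ∧
      (∀ j, j ≤ tau β s → (f j).length = n ∧ Adm β (f j)) ∧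
      (∀ j, j < tau β s → SuccIn β n (f (j+1)) (f j)) ∧
      (∀ j, j < tau β s → ¬ Full β (f j)) ∧
      Full β (f (tau β s)) := by
  have hepf : List.ofFn (fun i : Fin s => dig β 1 i) = S15.epf β s := rfl
  rw [hepf] at hdec
  have hu : u.length + s = n := by
    have h := hw
    rw [hdec, List.length_append, S15.epf_length] at h
    omega
  obtain ⟨x, hx, hd⟩ := hadm
  have hxcyl : x ∈ cyl β w := ⟨hx, hd⟩
  have hg := S15.good_of_mem_cyl hβ hxcyl
  have hA : ∀ k, k ≤ n → S15.val β ((u ++ S15.epf β s).drop k) < β ^ (n - k) := by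
    intro k hk
    rw [← hdec]
    have hkw : k ≤ w.length := by omega
    have h1 := (hg.2.2 k hkw).2
    have h2 := (hg.2.2 w.length le_rfl).1
    rw [List.take_length] at h2
    have hsplit := S15.val_take_drop (β := β) w k hkw
    have hpow : β ^ w.length = β ^ k * β ^ (w.length - k) := S15.pow_split hβ hkw
    have hpk : (0:ℝ) < β ^ (w.length - k) := by positivity
    rw [hpow] at h2
    have key : S15.val β (w.drop k) < β ^ (w.length - k) := by
      have h3 := mul_lt_mul_of_pos_right h1 hpk
      nlinarith [h3, h2, hsplit]
    rw [hw] at key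
    exact key
  obtain ⟨f, hf0, hf1, hf2, hf3, hf4⟩ := S15.main hβ s hs1 n u hsn hu hA
  rw [← hdec] at hf0
  exact ⟨f, hf0, hf1, hf2, hf3, hf4⟩
end

section
/- Let β > 1 with β ∉ ℕ and n ∈ ℕ. The maximal length of a run of consecutive full words in the lexicographically ordered Σ_β^n equals ⌊β⌋ + ε_M if ε(1,β) is finite with length M < n, and equals ⌊β⌋ if ε(1,β) is infinite or finite with length M ≥ n. -/
namespace S18

noncomputable def G (β : ℝ) (k : ℕ) : ℝ := (Tb β)^[k] 1

noncomputable def step (β : ℝ) : Option ℕ → ℕ → Option ℕ :=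
  fun s j => s.bind (fun k => if 1 ≤ β * G β k - j then some 0
    else if (j:ℝ) < β * G β k then some (k+1) else none)

noncomputable def st (β : ℝ) (w : List ℕ) : Option ℕ := w.foldl (step β) (some 0)

noncomputable def val (β : ℝ) (w : List ℕ) : ℝ :=
  ∑ i ∈ Finset.range w.length, (w.getD i 0 : ℝ) / β^(i+1)

lemma Tb_eq_fract (β x : ℝ) : Tb β x = Int.fract (β * x) := rfl

lemma Tb_nonneg (β x : ℝ) : 0 ≤ Tb β x := Int.fract_nonneg _

lemma Tb_lt_one (β x : ℝ) : Tb β x < 1 := Int.fract_lt_one _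

lemma G_zero (β : ℝ) : G β 0 = 1 := rfl

lemma G_succ (β : ℝ) (k : ℕ) : G β (k+1) = Tb β (G β k) :=
  Function.iterate_succ_apply' _ _ _

lemma G_nonneg (β : ℝ) (k : ℕ) : 0 ≤ G β k := by
  cases k with
  | zero => norm_num [G_zero]
  | succ k => rw [G_succ]; exact Tb_nonneg _ _

lemma G_lt_one (β : ℝ) {k : ℕ} (hk : 0 < k) : G β k < 1 := by
  obtain ⟨k, rfl⟩ := Nat.exists_eq_add_of_lt hk
  rw [Nat.zero_add, G_succ]; exact Tb_lt_one _ _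

lemma G_le_one (β : ℝ) (k : ℕ) : G β k ≤ 1 := by
  cases k with
  | zero => rw [G_zero]
  | succ k => exact le_of_lt (G_lt_one β (Nat.succ_pos k))

lemma dig_one_cast {β : ℝ} (hb : 1 < β) (k : ℕ) :
    ((dig β 1 k : ℕ) : ℝ) = (⌊β * G β k⌋ : ℤ) := by
  have h : 0 ≤ β * G β k := mul_nonneg (le_of_lt (lt_trans one_pos hb)) (G_nonneg β k)
  have : (0:ℤ) ≤ ⌊β * G β k⌋ := Int.floor_nonneg.2 h
  simp only [dig, G] at this ⊢
  exact_mod_cast Int.toNat_of_nonneg this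

lemma beta_G {β : ℝ} (hb : 1 < β) (k : ℕ) :
    β * G β k = dig β 1 k + G β (k+1) := by
  have := dig_one_cast hb k
  rw [G_succ, Tb_eq_fract, Int.fract]
  rw [this]; ring

lemma cyl_nil (β : ℝ) : cyl β [] = Set.Ico 0 1 := by
  ext x; simp [cyl]

lemma st_nil (β : ℝ) : st β [] = some 0 := rfl

lemma val_nil (β : ℝ) : val β [] = 0 := by simp [val]

lemma st_concat (β : ℝ) (w : List ℕ) (j : ℕ) :
    st β (w ++ [j]) = step β (st β w) j := by
  simp [st, List.foldl_append]

lemma getD_concat_lt (w : List ℕ) (j : ℕ) {i : ℕ} (h : i < w.length) :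
    (w ++ [j]).getD i 0 = w.getD i 0 := by
  rw [List.getD_eq_getElem _ _ (by simp; omega), List.getD_eq_getElem _ _ h,
    List.getElem_append_left h]

lemma getD_concat_self (w : List ℕ) (j : ℕ) :
    (w ++ [j]).getD w.length 0 = j := by
  rw [List.getD_eq_getElem _ _ (by simp)]
  simp

lemma val_concat (β : ℝ) (w : List ℕ) (j : ℕ) :
    val β (w ++ [j]) = val β w + j / β^(w.length+1) := by
  rw [val, val]
  simp only [List.length_append, List.length_singleton]
  rw [Finset.sum_range_succ, getD_concat_self]
  congr 1
  exact Finset.sum_congr rfl (fun i hi => by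
    rw [getD_concat_lt w j (Finset.mem_range.1 hi)])

lemma mem_cyl_concat {β : ℝ} {w : List ℕ} {j : ℕ} {x : ℝ} :
    x ∈ cyl β (w ++ [j]) ↔ x ∈ cyl β w ∧ j = dig β x w.length := by
  constructor
  · rintro ⟨h1, h2⟩
    refine ⟨⟨h1, fun i hi => ?_⟩, ?_⟩
    · have := h2 i (by simp; omega)
      rwa [List.getElem_append_left hi] at this
    · have := h2 w.length (by simp)
      rwa [List.getElem_concat_length rfl] at this
  · rintro ⟨⟨h1, h2⟩, h3⟩
    refine ⟨h1, fun i hi => ?_⟩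
    simp only [List.length_append, List.length_singleton] at hi
    rcases Nat.lt_or_ge i w.length with h | h
    · rw [List.getElem_append_left h]; exact h2 i h
    · have : i = w.length := by omega
      subst this
      rwa [List.getElem_concat_length rfl]

lemma cyl_concat_subset (β : ℝ) (w : List ℕ) (j : ℕ) :
    cyl β (w ++ [j]) ⊆ cyl β w := fun x hx => (mem_cyl_concat.1 hx).1

end S18
namespace S18

lemma nat_floor_iff {y : ℝ} (hy : 0 ≤ y) (j : ℕ) :
    j = (⌊y⌋).toNat ↔ ((j:ℝ) ≤ y ∧ y < j+1) := by
  have h0 : (0:ℤ) ≤ ⌊y⌋ := Int.floor_nonneg.2 hy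
  constructor
  · intro h
    have h2 : ⌊y⌋ = (j:ℤ) := by omega
    rw [Int.floor_eq_iff] at h2
    exact_mod_cast h2
  · intro h
    have h2 : ⌊y⌋ = (j:ℤ) := Int.floor_eq_iff.2 (by exact_mod_cast h)
    omega

lemma lt_add_div_iff {b : ℝ} (hb : 0 < b) {a x c : ℝ} : x < a + c / b ↔ b * (x - a) < c := by
  rw [← sub_lt_iff_lt_add', ← lt_div_iff₀' hb]

lemma add_div_le_iff {b : ℝ} (hb : 0 < b) {a x c : ℝ} : a + c / b ≤ x ↔ c ≤ b * (x - a) := by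
  rw [← le_sub_iff_add_le', ← div_le_iff₀' hb]

lemma struct {β : ℝ} (hb : 1 < β) (w : List ℕ) :
    (st β w = none → cyl β w = ∅) ∧
    ∀ k, st β w = some k → 0 < G β k ∧ 0 ≤ val β w ∧
      cyl β w = Set.Ico (val β w) (val β w + G β k / β^w.length) ∧
      ∀ x ∈ cyl β w, (Tb β)^[w.length] x = β^w.length * (x - val β w) := by
  have bpos : (0:ℝ) < β := lt_trans one_pos hb
  induction w using List.reverseRecOn with
  | nil =>
    constructor
    · intro h; simp [st_nil] at h
    · intro k hk
      rw [st_nil] at hk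
      injection hk with hk; subst hk
      refine ⟨by norm_num [G_zero], by norm_num [val_nil], ?_, ?_⟩
      · rw [cyl_nil, val_nil, G_zero]; norm_num
      · intro x _; simp [val_nil]
  | append_singleton w j ih =>
    have hstep : st β (w ++ [j]) = step β (st β w) j := st_concat β w j
    rcases h : st β w with _ | k
    · rw [h] at hstep
      have hc : cyl β w = ∅ := ih.1 h
      have hnone : st β (w ++ [j]) = none := by rw [hstep]; rfl
      constructor
      · intro _
        exact Set.eq_empty_of_subset_empty (hc ▸ cyl_concat_subset β w j)
      · intro k hk; rw [hnone] at hk; cases hk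
    · rw [h] at hstep
      obtain ⟨hG, ha, hcyl, hT⟩ := ih.2 k h
      set n := w.length with hn
      set a := val β w with hav
      have bp : (0:ℝ) < β^n := pow_pos bpos n
      have bp1 : (0:ℝ) < β^(n+1) := pow_pos bpos (n+1)
      -- membership characterization
      have hdig : ∀ x ∈ cyl β w,
          (j = dig β x n ↔ ((j:ℝ) ≤ β^(n+1)*(x - a) ∧ β^(n+1)*(x - a) < (j:ℝ)+1)) := by
        intro x hx
        have hxa : a ≤ x := by rw [hcyl] at hx; exact hx.1
        have he : β * ((Tb β)^[n] x) = β^(n+1)*(x - a) := by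
          rw [hT x hx, pow_succ]; ring
        have hd : dig β x n = (⌊β^(n+1)*(x-a)⌋).toNat := by
          rw [dig, he]
        rw [hd]
        exact nat_floor_iff (mul_nonneg (le_of_lt bp1) (sub_nonneg.2 hxa)) j
      have key : ∀ x, x ∈ cyl β (w ++ [j]) ↔
          (a ≤ x ∧ β^(n+1)*(x - a) < β * G β k ∧
           (j:ℝ) ≤ β^(n+1)*(x - a) ∧ β^(n+1)*(x - a) < (j:ℝ)+1) := by
        intro x
        rw [mem_cyl_concat]
        constructor
        · rintro ⟨hx, hdx⟩
          obtain ⟨h1, h2⟩ := (hdig x hx).1 hdx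
          have hx' := hx
          rw [hcyl] at hx'
          have hlt : β^(n+1)*(x - a) < β * G β k := by
            have := hx'.2
            rw [lt_add_div_iff bp] at this
            calc β^(n+1)*(x - a) = β * (β^n * (x-a)) := by rw [pow_succ]; ring
            _ < β * G β k := by nlinarith
          exact ⟨hx'.1, hlt, h1, h2⟩
        · rintro ⟨h1, h2, h3, h4⟩
          have hx : x ∈ cyl β w := by
            rw [hcyl]
            refine ⟨h1, ?_⟩
            rw [lt_add_div_iff bp]
            have : β * (β^n * (x-a)) < β * G β k := by
              calc β * (β^n * (x-a)) = β^(n+1)*(x - a) := by rw [pow_succ]; ring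
              _ < β * G β k := h2
            exact lt_of_mul_lt_mul_left this (le_of_lt bpos)
          exact ⟨hx, (hdig x hx).2 ⟨h3, h4⟩⟩
      have hlen : (w ++ [j]).length = n + 1 := by simp [hn]
      have hval' : ∀ c : ℝ, val β (w ++ [j]) + c/β^(n+1) = a + ((j:ℝ)+c)/β^(n+1) := by
        intro c
        rw [val_concat, add_assoc, ← add_div]
      have hvalc : val β (w ++ [j]) = a + (j:ℝ)/β^(n+1) := val_concat β w j
      have hva' : 0 ≤ val β (w ++ [j]) := by
        rw [hvalc]; positivity
      -- T formula helper
      have hTnew : ∀ x, x ∈ cyl β (w ++ [j]) →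
          (Tb β)^[(w++[j]).length] x
            = β^(n+1)*(x-a) - ⌊β^(n+1)*(x-a)⌋ := by
        intro x hx
        have hxw : x ∈ cyl β w := cyl_concat_subset β w j hx
        rw [hlen, Function.iterate_succ_apply', hT x hxw, Tb]
        have he : β * (β^n * (x - a)) = β^(n+1)*(x-a) := by rw [pow_succ]; ring
        rw [he]
      by_cases h1 : 1 ≤ β * G β k - (j:ℝ)
      · have hst : st β (w ++ [j]) = some 0 := by
          rw [hstep]; simp only [step, Option.bind_some]; rw [if_pos h1]
        constructor
        · rw [hst]; intro hh; cases hh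
        · intro k' hk'
          rw [hst] at hk'
          injection hk' with hk'; subst hk'
          refine ⟨by norm_num [G_zero], hva', ?_, ?_⟩
          · ext x
            rw [key x, Set.mem_Ico, G_zero, hlen, hval' 1, hvalc, add_div_le_iff bp1, lt_add_div_iff bp1]
            constructor
            · rintro ⟨_, _, h3, h4⟩; exact ⟨h3, h4⟩
            · rintro ⟨h3, h4⟩
              refine ⟨by nlinarith, by nlinarith, h3, h4⟩
          · intro x hx
            have hmem := (key x).1 hx
            have hfl : (⌊β^(n+1)*(x-a)⌋ : ℝ) = (j:ℝ) := by
              have : ⌊β^(n+1)*(x-a)⌋ = (j:ℤ) := by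
                rw [Int.floor_eq_iff]
                constructor
                · exact_mod_cast hmem.2.2.1
                · exact_mod_cast hmem.2.2.2
              rw [this]; norm_num
            rw [hTnew x hx, hfl, hlen, hvalc]
            field_simp
            ring
      · by_cases h2 : (j:ℝ) < β * G β k
        · have hst : st β (w ++ [j]) = some (k+1) := by
            rw [hstep]; simp only [step, Option.bind_some]; rw [if_neg h1, if_pos h2]
          have hfl : (⌊β * G β k⌋ : ℤ) = (j:ℤ) := by
            rw [Int.floor_eq_iff]
            constructor
            · exact_mod_cast le_of_lt h2
            · push_cast; linarith
          have hGk1 : G β (k+1) = β * G β k - (j:ℝ) := by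
            rw [G_succ, Tb_eq_fract, Int.fract, hfl]; norm_num
          constructor
          · rw [hst]; intro hh; cases hh
          · intro k' hk'
            rw [hst] at hk'
            injection hk' with hk'; subst hk'
            refine ⟨by rw [hGk1]; linarith, hva', ?_, ?_⟩
            · ext x
              rw [key x, Set.mem_Ico, hlen, hval' (G β (k+1)), hGk1, hvalc, add_div_le_iff bp1,
                lt_add_div_iff bp1]
              constructor
              · rintro ⟨_, hh2, h3, _⟩
                exact ⟨h3, by linarith⟩
              · rintro ⟨h3, h4⟩
                refine ⟨by nlinarith, by linarith, h3, by linarith⟩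
            · intro x hx
              have hmem := (key x).1 hx
              have hfl2 : (⌊β^(n+1)*(x-a)⌋ : ℝ) = (j:ℝ) := by
                have : ⌊β^(n+1)*(x-a)⌋ = (j:ℤ) := by
                  rw [Int.floor_eq_iff]
                  refine ⟨by exact_mod_cast hmem.2.2.1, by exact_mod_cast hmem.2.2.2⟩
                rw [this]; norm_num
              rw [hTnew x hx, hfl2, hlen, hvalc]
              field_simp
              ring
        · have hst : st β (w ++ [j]) = none := by
            rw [hstep]; simp only [step, Option.bind_some]; rw [if_neg h1, if_neg h2]
          constructor
          · intro _
            ext x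
            simp only [Set.mem_empty_iff_false, iff_false]
            intro hx
            have hmem := (key x).1 hx
            exact h2 (lt_of_le_of_lt hmem.2.2.1 hmem.2.1)
          · intro k' hk'; rw [hst] at hk'; cases hk'

end S18
namespace S18

noncomputable def dwrd (β : ℝ) (n : ℕ) (x : ℝ) : List ℕ :=
  List.ofFn (fun i : Fin n => dig β x i)

lemma dwrd_length (β : ℝ) (n : ℕ) (x : ℝ) : (dwrd β n x).length = n := by simp [dwrd]

lemma mem_cyl_dwrd {β x : ℝ} (hx : x ∈ Set.Ico (0:ℝ) 1) (n : ℕ) :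
    x ∈ cyl β (dwrd β n x) := by
  refine ⟨hx, fun i hi => ?_⟩
  simp [dwrd]

lemma eq_dwrd_of_mem_cyl {β x : ℝ} {w : List ℕ} (hx : x ∈ cyl β w) :
    w = dwrd β w.length x := by
  apply List.ext_getElem (by simp [dwrd_length])
  intro i h1 h2
  have := hx.2 i h1
  simp [dwrd, ← this]

lemma cyl_fiber {β x : ℝ} {u v : List ℕ} (hu : x ∈ cyl β u) (hv : x ∈ cyl β v)
    (hlen : u.length = v.length) : u = v := by
  rw [eq_dwrd_of_mem_cyl hu, eq_dwrd_of_mem_cyl hv, hlen]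

lemma adm_iff_nonempty {β : ℝ} {w : List ℕ} : Adm β w ↔ (cyl β w).Nonempty := Iff.rfl

lemma cyl_eq {β : ℝ} (hb : 1 < β) {w : List ℕ} {k : ℕ} (hst : st β w = some k) :
    cyl β w = Set.Ico (val β w) (val β w + G β k / β^w.length) :=
  ((struct hb w).2 k hst).2.2.1

lemma val_mem_cyl {β : ℝ} (hb : 1 < β) {w : List ℕ} {k : ℕ} (hst : st β w = some k) :
    val β w ∈ cyl β w := by
  obtain ⟨hG, ha, hcyl, _⟩ := (struct hb w).2 k hst
  rw [hcyl]
  refine ⟨le_refl _, ?_⟩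
  have : 0 < G β k / β^w.length := div_pos hG (pow_pos (lt_trans one_pos hb) _)
  linarith

lemma adm_of_st {β : ℝ} (hb : 1 < β) {w : List ℕ} {k : ℕ} (hst : st β w = some k) :
    Adm β w := ⟨val β w, (val_mem_cyl hb hst).1, (val_mem_cyl hb hst).2⟩

lemma st_of_adm {β : ℝ} (hb : 1 < β) {w : List ℕ} (h : Adm β w) :
    ∃ k, st β w = some k := by
  rcases hs : st β w with _ | k
  · obtain ⟨x, hx1, hx2⟩ := h
    have hx : x ∈ cyl β w := ⟨hx1, hx2⟩
    rw [(struct hb w).1 hs] at hx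
    exact absurd hx (Set.notMem_empty x)
  · exact ⟨k, rfl⟩

lemma val_nonneg {β : ℝ} (hb : 1 < β) (w : List ℕ) : 0 ≤ val β w := by
  apply Finset.sum_nonneg
  intro i _
  have : (0:ℝ) < β := lt_trans one_pos hb
  positivity

lemma val_lt_one {β : ℝ} (hb : 1 < β) {w : List ℕ} {k : ℕ} (hst : st β w = some k) :
    val β w < 1 := (val_mem_cyl hb hst).1.2

lemma end_le_one {β : ℝ} (hb : 1 < β) {w : List ℕ} {k : ℕ} (hst : st β w = some k) :
    val β w + G β k / β^w.length ≤ 1 := by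
  by_contra hlt
  push_neg at hlt
  have h1 : max (val β w) 1 ∈ cyl β w := by
    rw [cyl_eq hb hst]
    refine ⟨le_max_left _ _, ?_⟩
    rcases max_cases (val β w) 1 with ⟨h, _⟩ | ⟨h, _⟩
    · rw [h]
      have : 0 < G β k / β^w.length :=
        div_pos ((struct hb w).2 k hst).1 (pow_pos (lt_trans one_pos hb) _)
      linarith
    · rw [h]; exact hlt
  have h2 := h1.1.2
  have h3 : (1:ℝ) ≤ max (val β w) 1 := le_max_right _ _
  linarith

lemma image_cyl {β : ℝ} (hb : 1 < β) {w : List ℕ} {k : ℕ} (hst : st β w = some k) :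
    (Tb β)^[w.length] '' cyl β w = Set.Ico 0 (G β k) := by
  obtain ⟨hG, ha, hcyl, hT⟩ := (struct hb w).2 k hst
  have bp : (0:ℝ) < β^w.length := pow_pos (lt_trans one_pos hb) _
  ext y
  constructor
  · rintro ⟨x, hx, rfl⟩
    rw [hT x hx]
    rw [hcyl] at hx
    refine ⟨mul_nonneg (le_of_lt bp) (by linarith [hx.1]), ?_⟩
    have h2 := hx.2
    rwa [lt_add_div_iff bp] at h2
  · rintro ⟨hy0, hy1⟩
    have hmem : val β w + y/β^w.length ∈ cyl β w := by
      rw [hcyl]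
      refine ⟨le_add_of_nonneg_right (div_nonneg hy0 (le_of_lt bp)), ?_⟩
      have : y / β^w.length < G β k / β^w.length := by gcongr
      linarith
    refine ⟨val β w + y/β^w.length, hmem, ?_⟩
    rw [hT _ hmem]
    have h3 : val β w + y / β ^ w.length - val β w = y / β ^ w.length := by ring
    rw [h3, mul_comm, div_mul_cancel₀ _ (ne_of_gt bp)]

lemma full_iff {β : ℝ} (hb : 1 < β) (w : List ℕ) : Full β w ↔ st β w = some 0 := by
  constructor
  · intro hF
    rcases hs : st β w with _ | k
    · exfalso
      rw [Full, (struct hb w).1 hs, Set.image_empty] at hF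
      have : (0:ℝ) ∈ Set.Ico (0:ℝ) 1 := ⟨le_refl _, one_pos⟩
      rw [← hF] at this
      exact this
    · cases k with
      | zero => rfl
      | succ k =>
        exfalso
        rw [Full, image_cyl hb hs] at hF
        have h1 : G β (k+1) ∈ Set.Ico (0:ℝ) 1 := ⟨G_nonneg β _, G_lt_one β (Nat.succ_pos k)⟩
        rw [← hF] at h1
        exact lt_irrefl _ h1.2
  · intro hs
    rw [Full, image_cyl hb hs, G_zero]

lemma wlt_irrefl (u : List ℕ) : ¬ wlt u u := by
  rintro ⟨k, _, hk⟩; exact lt_irrefl _ hk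

lemma list_ext_getD {u v : List ℕ} (hlen : u.length = v.length)
    (h : ∀ i, u.getD i 0 = v.getD i 0) : u = v := by
  apply List.ext_getElem hlen
  intro i h1 h2
  have hh := h i
  rwa [List.getD_eq_getElem _ _ h1, List.getD_eq_getElem _ _ h2] at hh

lemma wlt_total {u v : List ℕ} (hlen : u.length = v.length) (hne : u ≠ v) :
    wlt u v ∨ wlt v u := by
  classical
  have hex : ∃ i, u.getD i 0 ≠ v.getD i 0 := by
    by_contra hc
    push_neg at hc
    exact hne (list_ext_getD hlen hc)
  have hk : u.getD (Nat.find hex) 0 ≠ v.getD (Nat.find hex) 0 := Nat.find_spec hex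
  have hpre : ∀ i < Nat.find hex, u.getD i 0 = v.getD i 0 := by
    intro i hi
    by_contra hc
    exact absurd hc (by simpa using Nat.find_min hex hi)
  rcases lt_or_gt_of_ne hk with h | h
  · exact Or.inl ⟨Nat.find hex, hpre, h⟩
  · exact Or.inr ⟨Nat.find hex, fun i hi => (hpre i hi).symm, h⟩

lemma wlt_witness_lt {u v : List ℕ} (h : wlt u v) :
    ∃ k, k < v.length ∧ (∀ i < k, u.getD i 0 = v.getD i 0) ∧ u.getD k 0 < v.getD k 0 := by
  obtain ⟨k, h1, h2⟩ := h
  refine ⟨k, ?_, h1, h2⟩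
  by_contra hk
  push_neg at hk
  have : v.getD k 0 = 0 := List.getD_eq_default _ _ hk
  have h2' : wordSeq v k = v.getD k 0 := rfl
  omega

lemma val_take (β : ℝ) (w : List ℕ) (m : ℕ) :
    val β (w.take m) = ∑ i ∈ Finset.range (min m w.length), (w.getD i 0 : ℝ)/β^(i+1) := by
  rw [val]
  simp only [List.length_take]
  apply Finset.sum_congr rfl
  intro i hi
  rw [Finset.mem_range] at hi
  congr 1
  rw [List.getD_eq_getElem _ _ (by simp [List.length_take]; omega),
    List.getD_eq_getElem _ _ (by omega : i < w.length)]
  norm_cast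
  exact List.getElem_take

lemma val_take_le {β : ℝ} (hb : 1 < β) (w : List ℕ) (m : ℕ) :
    val β (w.take m) ≤ val β w := by
  rw [val_take, val]
  apply Finset.sum_le_sum_of_subset_of_nonneg
  · apply Finset.range_subset_range.2; omega
  · intro i _ _
    have : (0:ℝ) < β := lt_trans one_pos hb
    positivity

lemma st_none_foldl (β : ℝ) (l : List ℕ) : List.foldl (step β) none l = none := by
  induction l with
  | nil => rfl
  | cons a l ih => simpa [step] using ih

lemma st_take_isSome {β : ℝ} {w : List ℕ} {k : ℕ} (h : st β w = some k) (m : ℕ) :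
    ∃ k', st β (w.take m) = some k' := by
  rcases hs : st β (w.take m) with _ | k'
  · exfalso
    have hw : st β w = List.foldl (step β) (st β (w.take m)) (w.drop m) := by
      rw [st, st]
      conv_lhs => rw [← List.take_append_drop m w]
      rw [List.foldl_append]
    rw [hs, st_none_foldl] at hw
    rw [h] at hw
    cases hw
  · exact ⟨k', rfl⟩

lemma cyl_take_subset (β : ℝ) (w : List ℕ) (m : ℕ) :
    cyl β w ⊆ cyl β (w.take m) := by
  rintro x ⟨h1, h2⟩
  refine ⟨h1, fun i hi => ?_⟩
  have hi' : i < w.length := by simp [List.length_take] at hi; omega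
  have := h2 i hi'
  rw [← this]
  exact List.getElem_take

lemma val_lt_of_wlt {β : ℝ} (hb : 1 < β) {u v : List ℕ} {ku : ℕ}
    (hu : st β u = some ku) (hlen : u.length = v.length) (h : wlt u v) :
    val β u < val β v := by
  have bpos : (0:ℝ) < β := lt_trans one_pos hb
  obtain ⟨k, hkv, hpre, hk⟩ := wlt_witness_lt h
  have hku : k < u.length := hlen ▸ hkv
  have bp1 : (0:ℝ) < β^(k+1) := pow_pos bpos _
  obtain ⟨kU, hkU⟩ := st_take_isSome hu (k+1)
  have hUlen : (u.take (k+1)).length = k+1 := by simp [List.length_take]; omega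
  have hmem : val β u ∈ cyl β (u.take (k+1)) :=
    cyl_take_subset β u (k+1) (val_mem_cyl hb hu)
  rw [cyl_eq hb hkU] at hmem
  have h1 : val β u < val β (u.take (k+1)) + 1/β^(k+1) := by
    have hGle : G β kU / β^(u.take (k+1)).length ≤ 1/β^(k+1) := by
      rw [hUlen]
      gcongr
      · exact G_le_one β kU
    linarith [hmem.2]
  have h2 : val β (u.take (k+1)) + 1/β^(k+1) ≤ val β (v.take (k+1)) := by
    rw [val_take, val_take, min_eq_left (by omega), min_eq_left (by omega)]
    rw [Finset.sum_range_succ, Finset.sum_range_succ]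
    have hsum : ∑ i ∈ Finset.range k, (u.getD i 0 : ℝ)/β^(i+1)
        = ∑ i ∈ Finset.range k, (v.getD i 0 : ℝ)/β^(i+1) := by
      apply Finset.sum_congr rfl
      intro i hi
      rw [hpre i (Finset.mem_range.1 hi)]
    rw [hsum]
    have : (u.getD k 0 : ℝ) + 1 ≤ v.getD k 0 := by exact_mod_cast hk
    have hd : (u.getD k 0 : ℝ)/β^(k+1) + 1/β^(k+1) ≤ (v.getD k 0 : ℝ)/β^(k+1) := by
      rw [← add_div]
      gcongr
    linarith
  have h3 : val β (v.take (k+1)) ≤ val β v := val_take_le hb v (k+1)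
  linarith

lemma wlt_of_val_lt {β : ℝ} (hb : 1 < β) {u v : List ℕ} {ku kv : ℕ}
    (hu : st β u = some ku) (hv : st β v = some kv) (hlen : u.length = v.length)
    (h : val β u < val β v) : wlt u v := by
  have hne : u ≠ v := by rintro rfl; exact lt_irrefl _ h
  rcases wlt_total hlen hne with hw | hw
  · exact hw
  · exact absurd (val_lt_of_wlt hb hv hlen.symm hw) (by linarith)

end S18
namespace S18

lemma step_none_iff {β : ℝ} {k j : ℕ} :
    step β (some k) j = none ↔ ¬((j:ℝ) < β * G β k) := by
  simp only [step, Option.bind_some]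
  split_ifs with h1 h2
  · constructor
    · intro h; cases h
    · intro h; exact absurd (by linarith : (j:ℝ) < β * G β k) h
  · constructor
    · intro h; cases h
    · intro h; exact absurd h2 h
  · constructor
    · intro _; exact h2
    · intro _; rfl

lemma step_lt_of_some {β : ℝ} {k j s : ℕ} (h : step β (some k) j = some s) :
    (j:ℝ) < β * G β k := by
  by_contra hc
  rw [← step_none_iff] at hc
  rw [h] at hc; cases hc

lemma step_cases {β : ℝ} {k j s : ℕ} (h : step β (some k) j = some s) :
    (s = 0 ∧ 1 ≤ β * G β k - (j:ℝ)) ∨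
    (s = k+1 ∧ ¬(1 ≤ β * G β k - (j:ℝ)) ∧ (j:ℝ) < β * G β k) := by
  revert h
  simp only [step, Option.bind_some]
  split_ifs with h1 h2
  · intro h; injection h with h; exact Or.inl ⟨h.symm, h1⟩
  · intro h; injection h with h; exact Or.inr ⟨h.symm, h1, h2⟩
  · intro h; cases h

lemma step_some_of_lt {β : ℝ} {k j : ℕ} (h : (j:ℝ) < β * G β k) :
    ∃ s, step β (some k) j = some s := by
  rcases hs : step β (some k) j with _ | s
  · rw [step_none_iff] at hs; exact absurd h hs
  · exact ⟨s, rfl⟩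

lemma dig_one_def (β : ℝ) (j : ℕ) : dig β 1 j = (⌊β * G β j⌋).toNat := rfl

lemma step_succ_digit {β : ℝ} (hb : 1 < β) {k j : ℕ}
    (h : step β (some k) j = some (k+1)) : j = dig β 1 k := by
  rcases step_cases h with ⟨h0, _⟩ | ⟨_, h1, h2⟩
  · omega
  · have hfl : ⌊β * G β k⌋ = (j:ℤ) := by
      rw [Int.floor_eq_iff]
      refine ⟨by exact_mod_cast le_of_lt h2, by push_cast; linarith⟩
    rw [dig_one_def, hfl]
    simp

lemma succ_iff {β : ℝ} (hb : 1 < β) {n : ℕ} {u v : List ℕ} {ku kv : ℕ}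
    (hu : st β u = some ku) (hv : st β v = some kv)
    (hul : u.length = n) (hvl : v.length = n) :
    SuccIn β n u v ↔ val β v = val β u + G β ku / β^n := by
  have bpos : (0:ℝ) < β := lt_trans one_pos hb
  have hGpos : 0 < G β ku / β^n := div_pos ((struct hb u).2 ku hu).1 (pow_pos bpos n)
  constructor
  · rintro ⟨_, _, _, _, hwlt, hnB⟩
    have h1 : val β u < val β v := val_lt_of_wlt hb hu (hul.trans hvl.symm) hwlt
    rcases lt_trichotomy (val β v) (val β u + G β ku / β^n) with hlt | heq | hgt
    · exfalso
      have hmem : val β v ∈ cyl β u := by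
        rw [cyl_eq hb hu, hul]; exact ⟨le_of_lt h1, hlt⟩
      have heq2 := cyl_fiber hmem (val_mem_cyl hb hv) (hul.trans hvl.symm)
      subst heq2
      exact wlt_irrefl u hwlt
    · exact heq
    · exfalso
      have hen : val β u + G β ku / β^n < 1 := lt_trans hgt (val_lt_one hb hv)
      have he0 : (0:ℝ) ≤ val β u + G β ku / β^n :=
        le_trans (val_nonneg hb u) (by linarith)
      set e := val β u + G β ku / β^n with he
      set z := dwrd β n e with hzdef
      have hze : e ∈ cyl β z := mem_cyl_dwrd ⟨he0, hen⟩ n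
      have hzlen : z.length = n := dwrd_length β n e
      obtain ⟨kz, hkz⟩ := st_of_adm hb (adm_iff_nonempty.2 ⟨e, hze⟩)
      have hzmem : e ∈ Set.Ico (val β z) (val β z + G β kz / β^n) := by
        rw [← hzlen, ← cyl_eq hb hkz]; exact hze
      have hvue : val β u < e := by rw [he]; linarith
      have hvzu : val β u < val β z := by
        by_contra hc
        push_neg at hc
        have hmem : val β u ∈ cyl β z := by
          rw [cyl_eq hb hkz, hzlen]
          exact ⟨hc, lt_trans hvue hzmem.2⟩
        have heq2 := cyl_fiber (val_mem_cyl hb hu) hmem (hul.trans hzlen.symm)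
        rw [← heq2] at hze
        rw [cyl_eq hb hu, hul] at hze
        exact absurd hze.2 (by linarith)
      have hvzv : val β z < val β v := lt_of_le_of_lt hzmem.1 hgt
      exact hnB ⟨z, hzlen, adm_of_st hb hkz,
        wlt_of_val_lt hb hu hkz (hul.trans hzlen.symm) hvzu,
        wlt_of_val_lt hb hkz hv (hzlen.trans hvl.symm) hvzv⟩
  · intro he
    have h1 : val β u < val β v := by rw [he]; linarith
    refine ⟨hul, hvl, adm_of_st hb hu, adm_of_st hb hv,
      wlt_of_val_lt hb hu hv (hul.trans hvl.symm) h1, ?_⟩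
    rintro ⟨z, hzlen, hzadm, h2, h3⟩
    obtain ⟨kz, hkz⟩ := st_of_adm hb hzadm
    have hv1 : val β u < val β z := val_lt_of_wlt hb hu (hul.trans hzlen.symm) h2
    have hv2 : val β z < val β v := val_lt_of_wlt hb hkz (hzlen.trans hvl.symm) h3
    have hmem : val β z ∈ cyl β u := by
      rw [cyl_eq hb hu, hul]
      exact ⟨le_of_lt hv1, by rw [he] at hv2; exact hv2⟩
    have heq2 := cyl_fiber (val_mem_cyl hb hkz) hmem (hzlen.trans hul.symm)
    subst heq2
    exact lt_irrefl _ hv1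

lemma getD_append_left {u v : List ℕ} {i : ℕ} (h : i < u.length) :
    (u ++ v).getD i 0 = u.getD i 0 := by
  rw [List.getD_eq_getElem _ _ (by simp; omega), List.getD_eq_getElem _ _ h,
    List.getElem_append_left h]

lemma getD_replicate_zero (r i : ℕ) : (List.replicate r (0:ℕ)).getD i 0 = 0 := by
  rcases Nat.lt_or_ge i r with h | h
  · rw [List.getD_eq_getElem _ _ (by simp [h]), List.getElem_replicate]
  · rw [List.getD_eq_default _ _ (by simp [h])]

lemma getD_take {u : List ℕ} {i j : ℕ} (h : j < i) :
    (u.take i).getD j 0 = u.getD j 0 := by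
  simp [List.getD_eq_getElem?_getD, List.getElem?_take, h]

lemma take_eq_take_of_agree {u v : List ℕ} {i : ℕ} (hu : i ≤ u.length) (hv : i ≤ v.length)
    (h : ∀ j < i, u.getD j 0 = v.getD j 0) : u.take i = v.take i := by
  apply list_ext_getD (by simp; omega)
  intro j
  rcases Nat.lt_or_ge j i with hj | hj
  · rw [getD_take hj, getD_take hj]
    exact h j hj
  · rw [List.getD_eq_default _ _ (by simp; omega), List.getD_eq_default _ _ (by simp; omega)]

lemma st_append_replicate {β : ℝ} (hb : 1 < β) {w : List ℕ} {k : ℕ}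
    (h : st β w = some k) (r : ℕ) :
    ∃ k', st β (w ++ List.replicate r 0) = some k' := by
  induction r with
  | zero => exact ⟨k, by simpa using h⟩
  | succ r ih =>
    obtain ⟨k', hk'⟩ := ih
    have hGk' : 0 < G β k' := ((struct hb (w ++ List.replicate r 0)).2 k' hk').1
    have hlt : ((0:ℕ):ℝ) < β * G β k' := by
      push_cast
      exact mul_pos (lt_trans one_pos hb) hGk'
    obtain ⟨s, hs⟩ := step_some_of_lt hlt
    refine ⟨s, ?_⟩
    rw [List.replicate_succ', ← List.append_assoc, st_concat, hk', hs]

end S18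
namespace S18

lemma getD_append_right {u v : List ℕ} {i : ℕ} (h : u.length ≤ i) :
    (u ++ v).getD i 0 = v.getD (i - u.length) 0 := by
  simp [List.getD_eq_getElem?_getD, List.getElem?_append_right h]

lemma succ_form {β : ℝ} (hb : 1 < β) {n : ℕ} {u v : List ℕ} (hS : SuccIn β n u v) :
    ∃ i, i < n ∧ v = u.take i ++ [u.getD i 0 + 1] ++ List.replicate (n-1-i) 0 := by
  classical
  obtain ⟨hul, hvl, hau, hav, hwlt, hnB⟩ := hS
  obtain ⟨ku, hku⟩ := st_of_adm hb hau
  obtain ⟨kv, hkv⟩ := st_of_adm hb hav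
  have hvaluv : val β u < val β v := val_lt_of_wlt hb hku (hul.trans hvl.symm) hwlt
  have hne : u ≠ v := fun h => absurd hvaluv (by rw [h]; exact lt_irrefl _)
  have hex : ∃ i, u.getD i 0 ≠ v.getD i 0 := by
    by_contra hc; push_neg at hc; exact hne (list_ext_getD (hul.trans hvl.symm) hc)
  have hdiff : u.getD (Nat.find hex) 0 ≠ v.getD (Nat.find hex) 0 := Nat.find_spec hex
  set i := Nat.find hex with hidef
  have hpre : ∀ j < i, u.getD j 0 = v.getD j 0 := fun j hj => by
    have := Nat.find_min hex hj; simpa using this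
  have hin : i < n := by
    by_contra hc; push_neg at hc
    have h1 : u.getD i 0 = 0 := List.getD_eq_default _ _ (by omega)
    have h2 : v.getD i 0 = 0 := List.getD_eq_default _ _ (by omega)
    omega
  have hui : u.getD i 0 < v.getD i 0 := by
    rcases Nat.lt_or_ge (u.getD i 0) (v.getD i 0) with h | h
    · exact h
    · exfalso
      have hwvu : wlt v u := ⟨i, fun j hj => (hpre j hj).symm, by
        show v.getD i 0 < u.getD i 0; omega⟩
      exact absurd (val_lt_of_wlt hb hkv (hvl.trans hul.symm) hwvu) (by linarith)
  set z := u.take i ++ [u.getD i 0 + 1] ++ List.replicate (n-1-i) 0 with hzdef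
  have htklen : (u.take i).length = i := by simp [List.length_take]; omega
  have hzlen : z.length = n := by
    rw [hzdef]; simp [htklen]; omega
  have hzlt : ∀ j < i, z.getD j 0 = u.getD j 0 := fun j hj => by
    rw [hzdef, getD_append_left (by simp [htklen]; try omega),
      getD_append_left (by rw [htklen]; omega), getD_take hj]
  have hzi : z.getD i 0 = u.getD i 0 + 1 := by
    rw [hzdef, getD_append_left (by simp [htklen]; try omega)]
    have := getD_concat_self (u.take i) (u.getD i 0 + 1)
    rwa [htklen] at this
  have hzgt : ∀ j, i < j → z.getD j 0 = 0 := by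
    intro j hj
    rcases Nat.lt_or_ge j n with h | h
    · rw [hzdef, getD_append_right (by simp [htklen]; try omega)]
      exact getD_replicate_zero _ _
    · exact List.getD_eq_default _ _ (by omega)
  have hvu_take : u.take i = v.take i :=
    take_eq_take_of_agree (by omega) (by omega) hpre
  obtain ⟨kA, hkA⟩ := st_take_isSome hku i
  obtain ⟨kV', hkV'⟩ := st_take_isSome hkv (i+1)
  have htkeq : v.take (i+1) = u.take i ++ [v.getD i 0] := by
    apply list_ext_getD (by simp [htklen]; try omega)
    intro j
    rcases Nat.lt_trichotomy j i with hj | hj | hj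
    · rw [getD_take (by omega), getD_append_left (by rw [htklen]; omega), getD_take hj,
        hpre j hj]
    · subst hj
      rw [getD_take (by omega)]
      have := getD_concat_self (u.take i) (v.getD i 0)
      rw [htklen] at this
      rw [this]
    · rw [List.getD_eq_default _ _ (by simp; omega),
        List.getD_eq_default _ _ (by simp [htklen]; omega)]
  have hstep_v : step β (some kA) (v.getD i 0) = some kV' := by
    rw [← hkV', htkeq, st_concat, hkA]
  obtain ⟨kz, hkz⟩ : ∃ kz, st β z = some kz := by
    have hlt : ((u.getD i 0 + 1 : ℕ):ℝ) < β * G β kA := by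
      have h1 := step_lt_of_some hstep_v
      have h2 : ((u.getD i 0 + 1:ℕ):ℝ) ≤ (v.getD i 0 : ℝ) := by exact_mod_cast hui
      linarith
    obtain ⟨s, hs⟩ := step_some_of_lt hlt
    have hst1 : st β (u.take i ++ [u.getD i 0 + 1]) = some s := by
      rw [st_concat, hkA, hs]
    obtain ⟨kz, hkz⟩ := st_append_replicate hb hst1 (n-1-i)
    exact ⟨kz, by rw [hzdef]; exact hkz⟩
  have hwltuz : wlt u z := ⟨i, fun j hj => (hzlt j hj).symm, by
    show u.getD i 0 < z.getD i 0; omega⟩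
  have hzv : z = v := by
    by_contra hzv
    have hwz : wlt z v := by
      rcases wlt_total (hzlen.trans hvl.symm) hzv with h | h
      · exact h
      · exfalso
        obtain ⟨m, hm1, hm2⟩ := h
        change v.getD m 0 < z.getD m 0 at hm2
        rcases Nat.lt_trichotomy m i with hmi | hmi | hmi
        · rw [hzlt m hmi, ← hpre m hmi] at hm2; exact lt_irrefl _ hm2
        · subst hmi; rw [hzi] at hm2; omega
        · rw [hzgt m hmi] at hm2; omega
    exact hnB ⟨z, hzlen, adm_of_st hb hkz, hwltuz, hwz⟩
  exact ⟨i, hin, hzv.symm⟩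

lemma st_suffix {β : ℝ} (hb : 1 < β) {w : List ℕ} {k : ℕ} (h : st β w = some k) :
    k ≤ w.length ∧ ∀ t, t < k → w.getD (w.length - k + t) 0 = dig β 1 t := by
  induction w using List.reverseRecOn generalizing k with
  | nil =>
    rw [st_nil] at h; injection h with h; subst h
    exact ⟨by simp, fun t ht => absurd ht (Nat.not_lt_zero t)⟩
  | append_singleton w j ih =>
    rw [st_concat] at h
    rcases hw : st β w with _ | k0
    · rw [hw] at h; simp [step] at h
    · rw [hw] at h
      rcases step_cases h with ⟨hk, _⟩ | ⟨hk, h1, h2⟩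
      · subst hk
        exact ⟨Nat.zero_le _, fun t ht => absurd ht (Nat.not_lt_zero t)⟩
      · subst hk
        have hdig : j = dig β 1 k0 := step_succ_digit hb h
        obtain ⟨hle, hsuf⟩ := ih hw
        have hlen : (w ++ [j]).length = w.length + 1 := by simp
        refine ⟨by omega, ?_⟩
        intro t ht
        rw [hlen, show w.length + 1 - (k0+1) + t = w.length - k0 + t from by omega]
        rcases Nat.lt_or_ge t k0 with h' | h'
        · rw [getD_append_left (by omega)]
          exact hsuf t h'
        · have ht0 : t = k0 := by omega
          subst ht0
          rw [show w.length - t + t = w.length from by omega, getD_concat_self]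
          exact hdig

lemma Tb_zero (β : ℝ) : Tb β 0 = 0 := by simp [Tb]

lemma G_zero_propagate {β : ℝ} {t : ℕ} (h : G β t = 0) : ∀ s, t ≤ s → G β s = 0 := by
  intro s hs
  obtain ⟨r, rfl⟩ := Nat.exists_eq_add_of_le hs
  clear hs
  induction r with
  | zero => simpa using h
  | succ r ih =>
    rw [show t + (r+1) = (t+r) + 1 from rfl, G_succ, ih]
    exact Tb_zero β

lemma dig_one_zero_of_G_zero {β : ℝ} {t : ℕ} (h : G β t = 0) : dig β 1 t = 0 := by
  rw [dig_one_def, h]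
  simp

lemma G_pos_of_finite {β : ℝ} (hb : 1 < β) {M : ℕ} (hM : FiniteLen β M) :
    ∀ t < M, 0 < G β t := by
  intro t ht
  rcases lt_or_eq_of_le (G_nonneg β t) with h | h
  · exact h
  · exfalso
    have hzero : G β (M-1) = 0 := G_zero_propagate h.symm _ (by omega)
    exact hM.2.1 (dig_one_zero_of_G_zero hzero)

lemma G_M_eq_zero {β : ℝ} (hb : 1 < β) {M : ℕ} (hM : FiniteLen β M) : G β M = 0 := by
  have hy0 : 0 ≤ G β M := G_nonneg β M
  have hd : ∀ i, dig β 1 (i + M) = 0 := fun i => hM.2.2 _ (by omega)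
  have hiter : ∀ i, (Tb β)^[i] (G β M) = β^i * G β M := by
    intro i
    induction i with
    | zero => simp
    | succ i ih =>
      have hdig : dig β 1 (i + M) = 0 := hd i
      have hGiM : (Tb β)^[i + M] 1 = (Tb β)^[i] (G β M) := Function.iterate_add_apply _ i M 1
      rw [dig, hGiM, ih] at hdig
      have hfl : ⌊β * (β^i * G β M)⌋ = 0 := by
        have h0 : (0:ℤ) ≤ ⌊β * (β^i * G β M)⌋ :=
          Int.floor_nonneg.2 (by positivity)
        omega
      rw [Function.iterate_succ_apply', ih, Tb, hfl]
      push_cast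
      ring
  by_contra hne
  have hpos : 0 < G β M := lt_of_le_of_ne hy0 (Ne.symm hne)
  obtain ⟨i, hi⟩ := pow_unbounded_of_one_lt (1 / G β M) hb
  have hlt : (Tb β)^[i] (G β M) < 1 := by
    cases i with
    | zero => simpa using G_lt_one β hM.1
    | succ i => rw [Function.iterate_succ_apply']; exact Tb_lt_one _ _
  rw [hiter i] at hlt
  rw [div_lt_iff₀ hpos] at hi
  linarith

lemma betaG_M {β : ℝ} (hb : 1 < β) {M : ℕ} (hM : FiniteLen β M) :
    β * G β (M-1) = (dig β 1 (M-1) : ℝ) := by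
  have hM1 := hM.1
  have h := beta_G hb (M-1)
  rw [show M - 1 + 1 = M from by omega, G_M_eq_zero hb hM] at h
  linarith

lemma epsM_pos {β : ℝ} {M : ℕ} (hM : FiniteLen β M) : 1 ≤ dig β 1 (M-1) :=
  Nat.one_le_iff_ne_zero.2 hM.2.1

lemma M_ge_two {β : ℝ} (hb : 1 < β) (hβn : ∀ m : ℕ, β ≠ m) {M : ℕ}
    (hM : FiniteLen β M) : 2 ≤ M := by
  have hM0 := hM.1
  rcases Nat.lt_or_ge M 2 with h | h
  · exfalso
    have hM1 : M = 1 := by omega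
    subst hM1
    have := betaG_M hb hM
    rw [show (1:ℕ) - 1 = 0 from rfl, G_zero, mul_one] at this
    exact hβn _ this
  · exact h

lemma finite_unique {β : ℝ} {M M' : ℕ} (h : FiniteLen β M) (h' : FiniteLen β M') :
    M = M' := by
  by_contra hne
  rcases Nat.lt_or_ge M M' with hlt | hge
  · exact h'.2.1 (h.2.2 _ (by omega))
  · exact h.2.1 (h'.2.2 _ (by omega))

lemma finite_of_G_zero {β : ℝ} (hb : 1 < β) {k : ℕ} (hk : G β k = 0) :
    ∃ M, FiniteLen β M ∧ M ≤ k := by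
  classical
  have hex : ∃ m, G β m = 0 := ⟨k, hk⟩
  set M := Nat.find hex with hMdef
  have hGM : G β M = 0 := Nat.find_spec hex
  have hMle : M ≤ k := Nat.find_le hk
  have hM1 : 0 < M := by
    rcases Nat.eq_zero_or_pos M with h | h
    · exfalso; rw [h, G_zero] at hGM; norm_num at hGM
    · exact h
  have hGM1 : 0 < G β (M-1) := by
    have := Nat.find_min hex (show M - 1 < M from by omega)
    exact lt_of_le_of_ne (G_nonneg β _) (Ne.symm this)
  refine ⟨M, ⟨hM1, ?_, ?_⟩, hMle⟩
  · intro hd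
    have h1 := beta_G hb (M-1)
    rw [show M - 1 + 1 = M from by omega, hGM, hd] at h1
    push_cast at h1
    nlinarith
  · intro j hj
    exact dig_one_zero_of_G_zero (G_zero_propagate hGM j hj)

lemma step_zero_zero {β : ℝ} (hb : 1 < β) : step β (some 0) 0 = some 0 := by
  simp only [step, Option.bind_some]
  rw [if_pos]
  rw [G_zero]
  push_cast
  linarith

lemma fold_zeros_zero {β : ℝ} (hb : 1 < β) (r : ℕ) :
    List.foldl (step β) (some 0) (List.replicate r 0) = some 0 := by
  induction r with
  | zero => rfl
  | succ r ih => rw [List.replicate_succ, List.foldl_cons, step_zero_zero hb]; exact ih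

lemma st_replicate_zero {β : ℝ} (hb : 1 < β) (r : ℕ) :
    st β (List.replicate r 0) = some 0 := fold_zeros_zero hb r

lemma fold_zero_climb {β : ℝ} (hb : 1 < β) {M : ℕ} (hM : FiniteLen β M) :
    ∀ r s, 1 ≤ s → s ≤ M - 1 → s + r = M →
      List.foldl (step β) (some s) (List.replicate r 0) = some 0 := by
  have hM1 : 0 < M := hM.1
  intro r
  induction r with
  | zero =>
    intro s hs1 hsle hsum
    exfalso
    omega
  | succ r ih =>
    intro s hs1 hsle hsum
    have hsM : s < M := by omega
    have hGs : 0 < G β s := G_pos_of_finite hb hM s hsM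
    rw [List.replicate_succ, List.foldl_cons]
    by_cases hc : 1 ≤ β * G β s - ((0:ℕ):ℝ)
    · have : step β (some s) 0 = some 0 := by
        simp only [step, Option.bind_some]; rw [if_pos hc]
      rw [this]; exact fold_zeros_zero hb r
    · have hs0 : ((0:ℕ):ℝ) < β * G β s := by
        push_cast
        exact mul_pos (lt_trans one_pos hb) hGs
      have hstep : step β (some s) 0 = some (s+1) := by
        simp only [step, Option.bind_some]; rw [if_neg hc, if_pos hs0]
      rw [hstep]
      have hsne : s ≠ M - 1 := by
        intro hse
        subst hse
        rw [betaG_M hb hM] at hc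
        push_cast at hc
        have := epsM_pos hM
        have : (1:ℝ) ≤ (dig β 1 (M-1) : ℝ) := by exact_mod_cast this
        linarith
      have hslt : s < M - 1 := by omega
      exact ih (s+1) (by omega) (by omega) (by omega)

end S18
namespace S18

noncomputable def epsW (β : ℝ) (r : ℕ) : List ℕ := List.ofFn (fun t : Fin r => dig β 1 t)

lemma epsW_length (β : ℝ) (r : ℕ) : (epsW β r).length = r := by simp [epsW]

lemma epsW_getD {β : ℝ} {t r : ℕ} (h : t < r) : (epsW β r).getD t 0 = dig β 1 t := by
  rw [List.getD_eq_getElem _ _ (by simp [epsW_length]; omega)]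
  simp [epsW]

lemma epsW_succ (β : ℝ) (r : ℕ) : epsW β (r+1) = epsW β r ++ [dig β 1 r] := by
  rw [epsW, List.ofFn_succ', epsW]
  simp [List.concat_eq_append]

lemma val_epsW {β : ℝ} (hb : 1 < β) (r : ℕ) :
    val β (epsW β r) = 1 - G β r / β^r := by
  have bpos : (0:ℝ) < β := lt_trans one_pos hb
  induction r with
  | zero => simp [epsW, val_nil, G_zero]
  | succ r ih =>
    rw [epsW_succ, val_concat, epsW_length, ih]
    have hbG := beta_G hb r
    have bp : (0:ℝ) < β^r := pow_pos bpos r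
    have bp1 : (0:ℝ) < β^(r+1) := pow_pos bpos (r+1)
    have h1 : G β r / β^r = (β * G β r) / β^(r+1) := by
      rw [pow_succ]
      field_simp
    rw [h1, hbG]
    field_simp
    ring

lemma eq_epsW_of_st {β : ℝ} (hb : 1 < β) {w : List ℕ} (hst : st β w = some w.length) :
    w = epsW β w.length := by
  obtain ⟨_, hsuf⟩ := st_suffix hb hst
  apply list_ext_getD (by simp [epsW_length])
  intro i
  rcases Nat.lt_or_ge i w.length with h | h
  · have := hsuf i h
    rw [Nat.sub_self, Nat.zero_add] at this
    rw [this, epsW_getD h]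
  · rw [List.getD_eq_default _ _ (by omega),
      List.getD_eq_default _ _ (by rw [epsW_length]; omega)]

lemma dig0_pos {β : ℝ} (hb : 1 < β) : 1 ≤ dig β 1 0 := by
  rw [dig_one_def, G_zero, mul_one]
  have h : (1:ℤ) ≤ ⌊β⌋ := Int.le_floor.2 (by exact_mod_cast le_of_lt hb)
  omega

lemma nat_le_floor {β : ℝ} {x : ℕ} (hx : (x:ℝ) ≤ β) : x ≤ Int.toNat ⌊β⌋ := by
  have h : (x:ℤ) ≤ ⌊β⌋ := Int.le_floor.2 (by exact_mod_cast hx)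
  omega

lemma toNat_floor_eq_dig0 (β : ℝ) : Int.toNat ⌊β⌋ = dig β 1 0 := by
  rw [dig_one_def, G_zero, mul_one]

lemma no_two_crit {β : ℝ} (hb : 1 < β) (hβn : ∀ m : ℕ, β ≠ m) {M m : ℕ}
    (hM : FiniteLen β M) {p q : List ℕ} (hS : SuccIn β m p q)
    (hp : st β p = some (M-1)) (hq : st β q = some (M-1)) : False := by
  have hM2 : 2 ≤ M := M_ge_two hb hβn hM
  obtain ⟨i, him, hform⟩ := succ_form hb hS
  have hplen : p.length = m := hS.1
  have hqlen : q.length = m := hS.2.1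
  have htklen : (p.take i).length = i := by simp [List.length_take]; omega
  have hqi : q.getD i 0 = p.getD i 0 + 1 := by
    rw [hform, getD_append_left (by simp [htklen]; try omega)]
    have := getD_concat_self (p.take i) (p.getD i 0 + 1)
    rwa [htklen] at this
  have hqgt : ∀ j, i < j → q.getD j 0 = 0 := by
    intro j hj
    rcases Nat.lt_or_ge j m with hjm | hjm
    · rw [hform, getD_append_right (by simp [htklen]; try omega)]
      exact getD_replicate_zero _ _
    · exact List.getD_eq_default _ _ (by omega)
  obtain ⟨hpk, hpsuf⟩ := st_suffix hb hp
  obtain ⟨hqk, hqsuf⟩ := st_suffix hb hq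
  rw [hplen] at hpk hpsuf
  rw [hqlen] at hqk hqsuf
  have hd0 : 1 ≤ dig β 1 0 := dig0_pos hb
  rcases Nat.lt_or_ge i (m - (M-1)) with hcase | hcase
  · have h0 := hqsuf 0 (by omega)
    have h1 : q.getD (m - (M-1) + 0) 0 = 0 := hqgt _ (by omega)
    omega
  · have hti : m - (M-1) + (i - (m - (M-1))) = i := by omega
    have htlt : i - (m - (M-1)) < M - 1 := by omega
    have h1 := hqsuf _ htlt
    have h2 := hpsuf _ htlt
    rw [hti] at h1 h2
    omega

end S18
namespace S18

lemma run_bound {β : ℝ} (hb : 1 < β) (hβn : ∀ m : ℕ, β ≠ m) {n l : ℕ} (hn : 0 < n)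
    {f : ℕ → List ℕ}
    (hf : ∀ j, j < l → (f j).length = n ∧ Adm β (f j) ∧ Full β (f j))
    (hchain : ∀ j, j + 1 < l → SuccIn β n (f j) (f (j+1))) :
    l ≤ Int.toNat ⌊β⌋ ∨
      ∃ M, FiniteLen β M ∧ M < n ∧ l ≤ Int.toNat ⌊β⌋ + dig β 1 (M-1) := by
  classical
  rcases Nat.eq_zero_or_pos l with rfl | hl
  · left; exact Nat.zero_le _
  have bpos : (0:ℝ) < β := lt_trans one_pos hb
  have bp : (0:ℝ) < β^n := pow_pos bpos n
  have bp1 : (0:ℝ) < β^(n-1) := pow_pos bpos (n-1)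
  set p : ℕ → List ℕ := fun j => (f j).take (n-1) with hpdef
  set d : ℕ → ℕ := fun j => (f j).getD (n-1) 0 with hddef
  set K : ℕ → ℕ := fun j => (st β (p j)).getD 0 with hKdef
  have hst0 : ∀ j, j < l → st β (f j) = some 0 :=
    fun j hj => (full_iff hb (f j)).1 (hf j hj).2.2
  have hplen : ∀ j, j < l → (p j).length = n - 1 := by
    intro j hj
    rw [hpdef]
    simp only [List.length_take, (hf j hj).1]
    omega
  have hsnoc : ∀ j, j < l → f j = p j ++ [d j] := by
    intro j hj
    apply list_ext_getD (by rw [List.length_append, hplen j hj, (hf j hj).1]; simp; omega)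
    intro i
    rcases Nat.lt_trichotomy i (n-1) with h | h | h
    · rw [getD_append_left (by rw [hplen j hj]; omega), hpdef, getD_take h]
    · subst h
      have h2 := getD_concat_self (p j) (d j)
      rw [hplen j hj] at h2
      rw [h2]
    · rw [List.getD_eq_default _ _ (by rw [(hf j hj).1]; omega),
        List.getD_eq_default _ _ (by rw [List.length_append, hplen j hj]; simp; omega)]
  have hK : ∀ j, j < l → st β (p j) = some (K j) := by
    intro j hj
    obtain ⟨k, hk⟩ := st_take_isSome (hst0 j hj) (n-1)
    rw [hKdef]
    simp only
    rw [hpdef] at *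
    rw [hk]
    rfl
  have hstep0 : ∀ j, j < l → step β (some (K j)) (d j) = some 0 := by
    intro j hj
    have h1 := hst0 j hj
    rw [hsnoc j hj, st_concat, hK j hj] at h1
    exact h1
  have hfull : ∀ j, j < l → 1 ≤ β * G β (K j) - (d j : ℝ) := by
    intro j hj
    rcases step_cases (hstep0 j hj) with ⟨_, h⟩ | ⟨h0, _, _⟩
    · exact h
    · exact absurd h0 (by omega)
  have hGpos : ∀ j, j < l → 0 < G β (K j) :=
    fun j hj => ((struct hb (p j)).2 _ (hK j hj)).1
  have hval : ∀ j, j < l → val β (f j) = val β (p j) + (d j : ℝ)/β^n := by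
    intro j hj
    conv_lhs => rw [hsnoc j hj]
    rw [val_concat, hplen j hj, show n - 1 + 1 = n from by omega]
  have hadj : ∀ j, j+1 < l → val β (f (j+1)) = val β (f j) + 1/β^n := by
    intro j hj
    have h1 := (succ_iff hb (hst0 j (by omega)) (hst0 (j+1) hj)
      (hf j (by omega)).1 (hf (j+1) hj).1).1 (hchain j hj)
    rwa [G_zero] at h1
  have hGdiv : ∀ j, (β * G β (K j))/β^n = G β (K j)/β^(n-1) := by
    intro j
    rw [show n = (n-1)+1 from by omega, pow_succ]
    field_simp
    ring_nf
    simp only [show 1 + (n - 1) - 1 = n - 1 from by omega]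
  have hdich : ∀ j, j+1 < l →
      (p (j+1) = p j ∧ d (j+1) = d j + 1) ∨
      (SuccIn β (n-1) (p j) (p (j+1)) ∧ β * G β (K j) = (d j : ℝ) + 1 ∧ d (j+1) = 0 ∧
        val β (p (j+1)) = val β (p j) + G β (K j)/β^(n-1)) := by
    intro j hj
    have hjl : j < l := by omega
    have hxE : val β (f (j+1)) ≤ val β (p j) + G β (K j)/β^(n-1) := by
      rw [hadj j hj, hval j hjl]
      have h1 : ((d j : ℝ) + 1)/β^n ≤ (β * G β (K j))/β^n := by
        gcongr
        linarith [hfull j hjl]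
      rw [← hGdiv j]
      rw [add_assoc, ← add_div]
      linarith
    have hx_in_q : val β (f (j+1)) ∈ cyl β (p (j+1)) :=
      cyl_take_subset β (f (j+1)) (n-1) (val_mem_cyl hb (hst0 (j+1) hj))
    rcases lt_or_eq_of_le hxE with hlt | heq
    · left
      have hx_in_p : val β (f (j+1)) ∈ cyl β (p j) := by
        rw [cyl_eq hb (hK j hjl), hplen j hjl]
        refine ⟨?_, hlt⟩
        rw [hadj j hj, hval j hjl]
        have h1 : (0:ℝ) ≤ (d j : ℝ)/β^n := by positivity
        have h2 : (0:ℝ) ≤ 1/β^n := by positivity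
        linarith
      have hpp : p (j+1) = p j :=
        cyl_fiber hx_in_q hx_in_p (by rw [hplen (j+1) hj, hplen j hjl])
      refine ⟨hpp, ?_⟩
      have h1 := hval (j+1) hj
      rw [hpp] at h1
      rw [hadj j hj, hval j hjl] at h1
      have h2 : ((d (j+1)) : ℝ) = (d j : ℝ) + 1 := by
        have hne : (β:ℝ)^n ≠ 0 := ne_of_gt bp
        field_simp at h1
        linarith
      exact_mod_cast h2
    · right
      have hbg : β * G β (K j) = (d j : ℝ) + 1 := by
        have h1 := heq
        rw [hadj j hj, hval j hjl, ← hGdiv j, add_assoc, ← add_div] at h1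
        have h2 : ((d j:ℝ)+1)/β^n = (β * G β (K j))/β^n := by linarith
        have hne : (β:ℝ)^n ≠ 0 := ne_of_gt bp
        field_simp at h2
        linarith
      have hppne : p (j+1) ≠ p j := by
        intro hpp
        have hKeq : K (j+1) = K j := by rw [hKdef]; simp only; rw [hpp]
        have h1 := hfull (j+1) hj
        rw [hKeq, hbg] at h1
        have h2 := hval (j+1) hj
        rw [hpp, hadj j hj, hval j hjl] at h2
        have h3 : ((d (j+1)) : ℝ) = (d j : ℝ) + 1 := by
          have hne : (β:ℝ)^n ≠ 0 := ne_of_gt bp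
          field_simp at h2
          linarith
        rw [h3] at h1
        linarith
      have hle : val β (p (j+1)) ≤ val β (f (j+1)) := by
        rw [hval (j+1) hj]
        have : (0:ℝ) ≤ (d (j+1) : ℝ)/β^n := by positivity
        linarith
      have hvq : val β (p (j+1)) = val β (f (j+1)) := by
        rcases lt_or_eq_of_le hle with hlt2 | heq2
        · exfalso
          rcases le_or_gt (val β (p j)) (val β (p (j+1))) with hc | hc
          · have hmem : val β (p (j+1)) ∈ cyl β (p j) := by
              rw [cyl_eq hb (hK j hjl), hplen j hjl]
              exact ⟨hc, by rw [← heq]; exact hlt2⟩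
            exact hppne (cyl_fiber (val_mem_cyl hb (hK (j+1) hj)) hmem
              (by rw [hplen (j+1) hj, hplen j hjl]))
          · have h3 : val β (f (j+1)) < val β (p (j+1)) + G β (K (j+1))/β^(n-1) := by
              have h4 := hx_in_q
              rw [cyl_eq hb (hK (j+1) hj), hplen (j+1) hj] at h4
              exact h4.2
            have h4 : val β (p j) ≤ val β (f j) := by
              rw [hval j hjl]
              have : (0:ℝ) ≤ (d j : ℝ)/β^n := by positivity
              linarith
            have h5 : val β (f j) < val β (f (j+1)) := by
              rw [hadj j hj]
              have : (0:ℝ) < 1/β^n := by positivity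
              linarith
            have hmem : val β (p j) ∈ cyl β (p (j+1)) := by
              rw [cyl_eq hb (hK (j+1) hj), hplen (j+1) hj]
              exact ⟨le_of_lt hc, by linarith⟩
            exact hppne ((cyl_fiber (val_mem_cyl hb (hK j hjl)) hmem
              (by rw [hplen (j+1) hj, hplen j hjl])).symm)
        · exact heq2
      have hd0 : d (j+1) = 0 := by
        have h1 := hval (j+1) hj
        rw [← hvq] at h1
        have h2 : ((d (j+1):ℕ):ℝ)/β^n = 0 := by linarith
        field_simp at h2
        rw [mul_zero] at h2
        exact_mod_cast h2
      have hvE : val β (p (j+1)) = val β (p j) + G β (K j)/β^(n-1) := by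
        rw [hvq, heq]
      have hsucc : SuccIn β (n-1) (p j) (p (j+1)) := by
        rw [succ_iff hb (hK j hjl) (hK (j+1) hj) (hplen j hjl) (hplen (j+1) hj)]
        exact hvE
      exact ⟨hsucc, hbg, hd0, hvE⟩
  -- crossing analysis
  have hcross : ∀ j, j+1 < l → β * G β (K j) = (d j : ℝ) + 1 →
      val β (p j) + G β (K j)/β^(n-1) < 1 →
      ∃ M, FiniteLen β M ∧ M < n ∧ K j = M - 1 := by
    intro j hj hbg hE
    have hjl : j < l := by omega
    have hfloor : ⌊β * G β (K j)⌋ = (d j : ℤ) + 1 := by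
      rw [hbg]
      rw [show ((d j : ℝ) + 1) = (((d j : ℕ) + 1 : ℕ) : ℝ) from by push_cast; ring]
      rw [Int.floor_natCast]
      push_cast
      ring
    have hG1 : G β (K j + 1) = 0 := by
      rw [G_succ, Tb_eq_fract, Int.fract, hfloor, hbg]
      push_cast
      ring
    obtain ⟨M, hM, hMle⟩ := finite_of_G_zero hb hG1
    have hKlt : K j < M := by
      by_contra hc
      push_neg at hc
      have h0 := G_zero_propagate (G_M_eq_zero hb hM) (K j) hc
      exact absurd h0 (ne_of_gt (hGpos j hjl))
    have hKeq : K j = M - 1 := by omega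
    have hKle : K j ≤ (p j).length := (st_suffix hb (hK j hjl)).1
    rw [hplen j hjl] at hKle
    have hMn : M ≤ n := by omega
    rcases lt_or_eq_of_le hMn with h | h
    · exact ⟨M, hM, h, hKeq⟩
    · exfalso
      have hK_n1 : K j = n - 1 := by omega
      have hpeq : p j = epsW β (n-1) := by
        have hst2 : st β (p j) = some (p j).length := by
          rw [hplen j hjl, ← hK_n1]; exact hK j hjl
        have h3 := eq_epsW_of_st hb hst2
        rwa [hplen j hjl] at h3
      have hvalp : val β (p j) = 1 - G β (K j)/β^(n-1) := by
        rw [hpeq, val_epsW hb, hK_n1]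
      rw [hvalp] at hE
      linarith
  by_cases hex : ∃ j, j + 1 < l ∧ p (j+1) ≠ p j
  · right
    set j1 := Nat.find hex with hj1def
    obtain ⟨hj1l, hj1ne⟩ : j1 + 1 < l ∧ p (j1+1) ≠ p j1 := Nat.find_spec hex
    have hmin : ∀ j < j1, ¬(j + 1 < l ∧ p (j+1) ≠ p j) := fun j hj => Nat.find_min hex hj
    have hbefore : ∀ j, j ≤ j1 → d j = d 0 + j := by
      intro j
      induction j with
      | zero => intro _; omega
      | succ j ih =>
        intro hj
        have h1 : j + 1 < l := by omega
        have hnc : p (j+1) = p j ∧ d (j+1) = d j + 1 := by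
          rcases hdich j h1 with h | h
          · exact h
          · exfalso
            apply hmin j (by omega)
            refine ⟨h1, ?_⟩
            intro hpp
            have := h.2.2.2
            rw [hpp] at this
            have hg : 0 < G β (K j)/β^(n-1) := div_pos (hGpos j (by omega)) bp1
            linarith
        rw [hnc.2, ih (by omega)]
        omega
    -- the crossing at j1
    obtain ⟨hsucc1, hbg1, hd01, hvE1⟩ :
        SuccIn β (n-1) (p j1) (p (j1+1)) ∧ β * G β (K j1) = (d j1 : ℝ) + 1 ∧
        d (j1+1) = 0 ∧ val β (p (j1+1)) = val β (p j1) + G β (K j1)/β^(n-1) := by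
      rcases hdich j1 hj1l with h | h
      · exact absurd h.1 hj1ne
      · exact h
    have hE1 : val β (p j1) + G β (K j1)/β^(n-1) < 1 := by
      rw [← hvE1]
      exact val_lt_one hb (hK (j1+1) hj1l)
    obtain ⟨M, hM, hMn, hKM⟩ := hcross j1 hj1l hbg1 hE1
    refine ⟨M, hM, hMn, ?_⟩
    -- epsilon_M = d j1 + 1
    have hepsd : dig β 1 (M-1) = d j1 + 1 := by
      have h1 := betaG_M hb hM
      rw [hKM] at hbg1
      rw [h1] at hbg1
      exact_mod_cast hbg1
    -- after the crossing
    have hafter : ∀ j, j1 + 1 ≤ j → j < l → p j = p (j1+1) ∧ d j = j - (j1+1) := by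
      intro j
      induction j with
      | zero => intro h1 _; omega
      | succ j ih =>
        intro h1 h2
        rcases Nat.lt_or_ge j1 j with hgt | hge
        · -- j ≥ j1+1
          obtain ⟨ihp, ihd⟩ := ih (by omega) (by omega)
          have hnc : p (j+1) = p j ∧ d (j+1) = d j + 1 := by
            rcases hdich j h2 with h | h
            · exact h
            · exfalso
              obtain ⟨hsucc2, hbg2, hd02, hvE2⟩ := h
              have hE2 : val β (p j) + G β (K j)/β^(n-1) < 1 := by
                rw [← hvE2]
                exact val_lt_one hb (hK (j+1) h2)
              obtain ⟨M2, hM2, hM2n, hKM2⟩ := hcross j h2 hbg2 hE2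
              have hMeq : M2 = M := finite_unique hM2 hM
              subst hMeq
              have hstq : st β (p (j1+1)) = some (M2 - 1) := by
                rw [← ihp, ← hKM2]; exact hK j (by omega)
              have hstp1 : st β (p j1) = some (M2 - 1) := by
                rw [← hKM]; exact hK j1 (by omega)
              exact no_two_crit hb hβn hM2 hsucc1 hstp1 hstq
          exact ⟨hnc.1.trans ihp, by omega⟩
        · -- j + 1 = j1 + 1, i.e. j = j1
          have hj1j : j = j1 := by omega
          subst hj1j
          exact ⟨rfl, by omega⟩
    have hlast := hfull (l-1) (by omega)
    have hl2 : j1 + 1 ≤ l - 1 := by omega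
    obtain ⟨hpl, hdl⟩ := hafter (l-1) hl2 (by omega)
    have hbound : ((l - 1 - (j1+1) : ℕ) : ℝ) + 1 ≤ β := by
      have hGle1 : G β (K (l-1)) ≤ 1 := G_le_one β _
      have h1 : β * G β (K (l-1)) ≤ β := by nlinarith [hGpos (l-1) (show l-1 < l from by omega)]
      rw [hdl] at hlast
      linarith
    have hfl : l - 1 - (j1+1) + 1 ≤ Int.toNat ⌊β⌋ := by
      apply nat_le_floor
      push_cast
      push_cast at hbound
      linarith
    have hd1e : d j1 = d 0 + j1 := hbefore j1 (le_refl _)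
    omega
  · left
    push_neg at hex
    have hconst : ∀ j, j < l → d j = d 0 + j := by
      intro j
      induction j with
      | zero => intro _; omega
      | succ j ih =>
        intro hj
        have h1 : j + 1 < l := hj
        have hpp : p (j+1) = p j := hex j h1
        have hnc : d (j+1) = d j + 1 := by
          rcases hdich j h1 with h | h
          · exact h.2
          · exfalso
            obtain ⟨_, _, _, hvE2⟩ := h
            rw [hpp] at hvE2
            have hg : 0 < G β (K j)/β^(n-1) := div_pos (hGpos j (by omega)) bp1
            linarith
        rw [hnc, ih (by omega)]
        omega
    have hlast := hfull (l-1) (by omega)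
    rw [hconst (l-1) (by omega)] at hlast
    have hGle1 : G β (K (l-1)) ≤ 1 := G_le_one β _
    have h1 : β * G β (K (l-1)) ≤ β := by nlinarith [hGpos (l-1) (show l-1 < l from by omega)]
    apply nat_le_floor
    have : ((d 0 + (l-1) : ℕ) : ℝ) + 1 ≤ β := by linarith
    push_cast at this ⊢
    have hc : (l:ℝ) ≤ (d 0:ℝ) + (l-1:ℕ) + 1 := by
      push_cast
      have : ((l-1:ℕ):ℝ) = (l:ℝ) - 1 := by
        have : 1 ≤ l := hl
        push_cast [Nat.cast_sub this]
        ring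
      rw [this]
      have : (0:ℝ) ≤ (d 0 : ℝ) := Nat.cast_nonneg _
      linarith
    linarith

end S18
namespace S18

lemma st_append (β : ℝ) (A B : List ℕ) :
    st β (A ++ B) = List.foldl (step β) (st β A) B := by
  rw [st, st, List.foldl_append]

lemma val_append {β : ℝ} (hb : 1 < β) (A B : List ℕ) :
    val β (A ++ B) = val β A + val β B / β^A.length := by
  have hβ0 : (β:ℝ) ≠ 0 := ne_of_gt (lt_trans one_pos hb)
  induction B using List.reverseRecOn with
  | nil => simp [val_nil]
  | append_singleton B j ih =>
    rw [← List.append_assoc, val_concat, ih, val_concat]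
    rw [List.length_append]
    field_simp
    ring

lemma val_replicate_zero (β : ℝ) (r : ℕ) : val β (List.replicate r 0) = 0 := by
  rw [val]
  apply Finset.sum_eq_zero
  intro i _
  rw [getD_replicate_zero]
  simp

lemma cast_toNat_floor_le {β : ℝ} (hb : 1 < β) : ((Int.toNat ⌊β⌋ : ℕ) : ℝ) ≤ β := by
  have h0 : (0:ℤ) ≤ ⌊β⌋ := Int.floor_nonneg.2 (by linarith)
  have h1 : ((Int.toNat ⌊β⌋ : ℕ) : ℝ) = ((⌊β⌋ : ℤ) : ℝ) := by
    rw [← Int.toNat_of_nonneg h0]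
    push_cast
    rw [Int.toNat_of_nonneg h0]
  rw [h1]
  exact Int.floor_le β

lemma cast_toNat_floor_lt {β : ℝ} (hb : 1 < β) (hβn : ∀ m : ℕ, β ≠ m) :
    ((Int.toNat ⌊β⌋ : ℕ) : ℝ) < β :=
  lt_of_le_of_ne (cast_toNat_floor_le hb) (Ne.symm (hβn _))

lemma beta_lt_toNat_floor_add_one {β : ℝ} (hb : 1 < β) :
    β < ((Int.toNat ⌊β⌋ : ℕ) : ℝ) + 1 := by
  have h0 : (0:ℤ) ≤ ⌊β⌋ := Int.floor_nonneg.2 (by linarith)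
  have h1 : ((Int.toNat ⌊β⌋ : ℕ) : ℝ) = ((⌊β⌋ : ℤ) : ℝ) := by
    rw [← Int.toNat_of_nonneg h0]
    push_cast
    rw [Int.toNat_of_nonneg h0]
  rw [h1]
  exact Int.lt_floor_add_one β

lemma toNat_floor_pos {β : ℝ} (hb : 1 < β) : 1 ≤ Int.toNat ⌊β⌋ := by
  rw [toNat_floor_eq_dig0]
  exact dig0_pos hb

lemma st_epsW {β : ℝ} (hb : 1 < β) {M : ℕ} (hM : FiniteLen β M) :
    ∀ r, r ≤ M - 1 → st β (epsW β r) = some r := by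
  have hM1 : 0 < M := hM.1
  intro r
  induction r with
  | zero => intro _; rfl
  | succ r ih =>
    intro hr
    rw [epsW_succ, st_concat, ih (by omega)]
    have hG1 : G β (r+1) = β * G β r - dig β 1 r := by
      have := beta_G hb r; linarith
    have hGpos : 0 < G β (r+1) := G_pos_of_finite hb hM (r+1) (by omega)
    have hGlt : G β (r+1) < 1 := G_lt_one β (Nat.succ_pos r)
    simp only [step, Option.bind_some]
    rw [if_neg (by linarith), if_pos (by linarith)]

lemma pred_of_full {β : ℝ} (hb : 1 < β) {n : ℕ} (hn : 0 < n) {u v : List ℕ} {kv : ℕ}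
    (hu0 : st β u = some 0) (hkv : st β v = some kv)
    (hul : u.length = n) (hvl : v.length = n)
    (hadj : val β v = val β u + 1/β^n) :
    (v.take (n-1) = u.take (n-1)) ∨
    (SuccIn β (n-1) (u.take (n-1)) (v.take (n-1)) ∧
     ∃ ku, st β (u.take (n-1)) = some ku ∧ β * G β ku = (u.getD (n-1) 0 : ℝ) + 1) := by
  have bpos : (0:ℝ) < β := lt_trans one_pos hb
  have bp : (0:ℝ) < β^n := pow_pos bpos n
  have bp1 : (0:ℝ) < β^(n-1) := pow_pos bpos (n-1)
  set pu := u.take (n-1) with hpu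
  set pv := v.take (n-1) with hpv
  set du := u.getD (n-1) 0 with hdu
  set dv := v.getD (n-1) 0 with hdv
  have hsnoc : ∀ (w : List ℕ), w.length = n → w = w.take (n-1) ++ [w.getD (n-1) 0] := by
    intro w hw
    apply list_ext_getD (by simp [List.length_take]; omega)
    intro i
    rcases Nat.lt_trichotomy i (n-1) with h | h | h
    · rw [getD_append_left (by simp [List.length_take]; omega), getD_take h]
    · subst h
      have h2 := getD_concat_self (w.take (n-1)) (w.getD (n-1) 0)
      have h3 : (w.take (n-1)).length = n-1 := by simp [List.length_take]; omega
      rw [h3] at h2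
      rw [h2]
    · rw [List.getD_eq_default _ _ (by omega),
        List.getD_eq_default _ _ (by simp [List.length_take]; omega)]
  have hpulen : pu.length = n - 1 := by simp [hpu, List.length_take]; omega
  have hpvlen : pv.length = n - 1 := by simp [hpv, List.length_take]; omega
  obtain ⟨ku, hku⟩ := st_take_isSome hu0 (n-1)
  obtain ⟨kv', hkv'⟩ := st_take_isSome hkv (n-1)
  rw [← hpu] at hku
  rw [← hpv] at hkv'
  have hstepu : step β (some ku) du = some 0 := by
    have h1 := hu0
    rw [hsnoc u hul, st_concat] at h1
    rw [← hku]; exact h1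
  have hstepv : step β (some kv') dv = some kv := by
    have h1 := hkv
    rw [hsnoc v hvl, st_concat] at h1
    rw [← hkv']; exact h1
  have hfullu : 1 ≤ β * G β ku - (du : ℝ) := by
    rcases step_cases hstepu with ⟨_, h⟩ | ⟨h0, _, _⟩
    · exact h
    · exact absurd h0 (by omega)
  have hGposu : 0 < G β ku := ((struct hb pu).2 _ hku).1
  have hGposv : 0 < G β kv' := ((struct hb pv).2 _ hkv').1
  have hvalu : val β u = val β pu + (du : ℝ)/β^n := by
    conv_lhs => rw [hsnoc u hul]
    rw [val_concat, hpulen, show n - 1 + 1 = n from by omega]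
  have hvalv : val β v = val β pv + (dv : ℝ)/β^n := by
    conv_lhs => rw [hsnoc v hvl]
    rw [val_concat, hpvlen, show n - 1 + 1 = n from by omega]
  have hGdiv : (β * G β ku)/β^n = G β ku/β^(n-1) := by
    rw [show n = (n-1)+1 from by omega, pow_succ]
    field_simp
    ring_nf
    simp only [show 1 + (n - 1) - 1 = n - 1 from by omega]
  have hxE : val β v ≤ val β pu + G β ku/β^(n-1) := by
    rw [hadj, hvalu]
    have h1 : ((du : ℝ) + 1)/β^n ≤ (β * G β ku)/β^n := by
      gcongr
      linarith
    rw [← hGdiv, add_assoc, ← add_div]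
    linarith
  have hx_in_v : val β v ∈ cyl β pv := by
    rw [hpv]
    exact cyl_take_subset β v (n-1) (val_mem_cyl hb hkv)
  rcases lt_or_eq_of_le hxE with hlt | heq
  · left
    have hx_in_u : val β v ∈ cyl β pu := by
      rw [cyl_eq hb hku, hpulen]
      refine ⟨?_, hlt⟩
      rw [hadj, hvalu]
      have h1 : (0:ℝ) ≤ (du : ℝ)/β^n := by positivity
      have h2 : (0:ℝ) ≤ 1/β^n := by positivity
      linarith
    exact cyl_fiber hx_in_v hx_in_u (by rw [hpvlen, hpulen])
  · right
    have hbg : β * G β ku = (du : ℝ) + 1 := by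
      have h1 := heq
      rw [hadj, hvalu, ← hGdiv, add_assoc, ← add_div] at h1
      have h2 : ((du:ℝ)+1)/β^n = (β * G β ku)/β^n := by linarith
      have hne : (β:ℝ)^n ≠ 0 := ne_of_gt bp
      field_simp at h2
      linarith
    have hppne : pv ≠ pu := by
      intro hpp
      have hKeq : kv' = ku := by
        rw [hpp] at hkv'
        rw [hku] at hkv'
        injection hkv'.symm
      have h2 := hvalv
      rw [hpp, hadj, hvalu] at h2
      have h3 : ((dv) : ℝ) = (du : ℝ) + 1 := by
        have hne : (β:ℝ)^n ≠ 0 := ne_of_gt bp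
        field_simp at h2
        linarith
      have h4 := step_lt_of_some hstepv
      rw [hKeq, hbg] at h4
      linarith
    have hle : val β pv ≤ val β v := by
      rw [hvalv]
      have : (0:ℝ) ≤ (dv : ℝ)/β^n := by positivity
      linarith
    have hvq : val β pv = val β v := by
      rcases lt_or_eq_of_le hle with hlt2 | heq2
      · exfalso
        rcases le_or_gt (val β pu) (val β pv) with hc | hc
        · have hmem : val β pv ∈ cyl β pu := by
            rw [cyl_eq hb hku, hpulen]
            exact ⟨hc, by rw [← heq]; exact hlt2⟩
          exact hppne (cyl_fiber (val_mem_cyl hb hkv') hmem (by rw [hpvlen, hpulen]))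
        · have h3 : val β v < val β pv + G β kv'/β^(n-1) := by
            have h4 := hx_in_v
            rw [cyl_eq hb hkv', hpvlen] at h4
            exact h4.2
          have h4 : val β pu ≤ val β u := by
            rw [hvalu]
            have : (0:ℝ) ≤ (du : ℝ)/β^n := by positivity
            linarith
          have h5 : val β u < val β v := by
            rw [hadj]
            have : (0:ℝ) < 1/β^n := by positivity
            linarith
          have hmem : val β pu ∈ cyl β pv := by
            rw [cyl_eq hb hkv', hpvlen]
            exact ⟨le_of_lt hc, by linarith⟩
          exact hppne ((cyl_fiber (val_mem_cyl hb hku) hmem (by rw [hpvlen, hpulen])).symm)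
      · exact heq2
    have hsucc : SuccIn β (n-1) pu pv := by
      rw [succ_iff hb hku hkv' hpulen hpvlen]
      rw [hvq, heq]
    exact ⟨hsucc, ku, hku, hbg⟩

end S18
namespace S18

lemma snoc_eq {n : ℕ} (hn : 0 < n) {w : List ℕ} (hw : w.length = n) :
    w = w.take (n-1) ++ [w.getD (n-1) 0] := by
  apply list_ext_getD (by simp [List.length_take]; omega)
  intro i
  rcases Nat.lt_trichotomy i (n-1) with h | h | h
  · rw [getD_append_left (by simp [List.length_take]; omega), getD_take h]
  · subst h
    have h2 := getD_concat_self (w.take (n-1)) (w.getD (n-1) 0)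
    have h3 : (w.take (n-1)).length = n-1 := by simp [List.length_take]; omega
    rw [h3] at h2
    rw [h2]
  · rw [List.getD_eq_default _ _ (by omega),
      List.getD_eq_default _ _ (by simp [List.length_take]; omega)]

lemma val_snoc {β : ℝ} (hb : 1 < β) {n : ℕ} (hn : 0 < n) {w : List ℕ} (hw : w.length = n) :
    val β w = val β (w.take (n-1)) + (w.getD (n-1) 0 : ℝ)/β^n := by
  conv_lhs => rw [snoc_eq hn hw]
  rw [val_concat, show (w.take (n-1)).length = n - 1 from by simp [List.length_take]; omega,
    show n - 1 + 1 = n from by omega]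

lemma take_concat {A : List ℕ} {x m : ℕ} (h : A.length = m) : (A ++ [x]).take m = A := by
  rw [← h]
  exact List.take_left

lemma crit_state {β : ℝ} (hb : 1 < β) {M : ℕ} (hM : FiniteLen β M) {k dd : ℕ}
    (hbg : β * G β k = (dd:ℝ)+1) (hGk : 0 < G β k) : k = M - 1 := by
  have hfloor : ⌊β * G β k⌋ = (dd : ℤ) + 1 := by
    rw [hbg, show ((dd : ℝ) + 1) = (((dd + 1 : ℕ)) : ℝ) from by push_cast; ring,
      Int.floor_natCast]
    push_cast
    ring
  have hG1 : G β (k + 1) = 0 := by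
    rw [G_succ, Tb_eq_fract, Int.fract, hfloor, hbg]
    push_cast
    ring
  obtain ⟨M2, hM2, hM2le⟩ := finite_of_G_zero hb hG1
  have hMeq : M2 = M := finite_unique hM2 hM
  subst hMeq
  have hKlt : k < M2 := by
    by_contra hc
    push_neg at hc
    exact absurd (G_zero_propagate (G_M_eq_zero hb hM2) k hc) (ne_of_gt hGk)
  omega

lemma maxrun_bottom {β : ℝ} (hb : 1 < β) (hβn : ∀ m : ℕ, β ≠ m) {n : ℕ} (hn : 0 < n) :
    MaxFullRun β n (Int.toNat ⌊β⌋) := by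
  classical
  have hB1 : 1 ≤ Int.toNat ⌊β⌋ := toNat_floor_pos hb
  set B := Int.toNat ⌊β⌋ with hBdef
  have bpos : (0:ℝ) < β := lt_trans one_pos hb
  have bp : (0:ℝ) < β^n := pow_pos bpos n
  have hBle : ((B:ℕ):ℝ) ≤ β := cast_toNat_floor_le hb
  have hBlt : ((B:ℕ):ℝ) < β := cast_toNat_floor_lt hb hβn
  have hBgt : β < ((B:ℕ):ℝ) + 1 := beta_lt_toNat_floor_add_one hb
  set Z := List.replicate (n-1) (0:ℕ) with hZdef
  have hZlen : Z.length = n - 1 := by simp [hZdef]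
  have hZst : st β Z = some 0 := st_replicate_zero hb (n-1)
  set F : ℕ → List ℕ := fun j => Z ++ [j] with hFdef
  have hFlen : ∀ j, (F j).length = n := by
    intro j
    rw [hFdef]
    simp only [List.length_append, List.length_singleton, hZlen]
    omega
  have hFst : ∀ j : ℕ, (j:ℝ) + 1 ≤ β → st β (F j) = some 0 := by
    intro j hj
    rw [hFdef]
    simp only
    rw [st_concat, hZst]
    simp only [step, Option.bind_some]
    rw [if_pos (by rw [G_zero]; push_cast; linarith)]
  have hFval : ∀ j : ℕ, val β (F j) = (j:ℝ)/β^n := by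
    intro j
    rw [hFdef]
    simp only
    rw [val_concat, hZdef, val_replicate_zero, List.length_replicate,
      show n - 1 + 1 = n from by omega]
    ring
  have hstB : st β (F B) = some 1 := by
    rw [hFdef]
    simp only
    rw [st_concat, hZst]
    simp only [step, Option.bind_some]
    rw [G_zero, mul_one]
    rw [if_neg (by push_cast; linarith), if_pos hBlt]
  refine ⟨by omega, F, ?_, ?_, ?_, ?_⟩
  · intro j hj
    have hjB : (j:ℝ) + 1 ≤ β := by
      have h1 : ((j+1:ℕ):ℝ) ≤ (B:ℝ) := by exact_mod_cast hj
      push_cast at h1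
      linarith
    exact ⟨hFlen j, adm_of_st hb (hFst j hjB), (full_iff hb _).2 (hFst j hjB)⟩
  · intro j hj
    have hjB : (j:ℝ) + 1 ≤ β := by
      have h1 : ((j+1:ℕ):ℝ) ≤ (B:ℝ) := by exact_mod_cast (by omega : j + 1 ≤ B)
      push_cast at h1
      linarith
    have hjB1 : ((j+1:ℕ):ℝ) + 1 ≤ β := by
      have h1 : ((j+2:ℕ):ℝ) ≤ (B:ℝ) := by exact_mod_cast (by omega : j + 2 ≤ B)
      push_cast at h1 ⊢
      linarith
    rw [succ_iff hb (hFst j hjB) (hFst (j+1) hjB1) (hFlen j) (hFlen (j+1))]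
    rw [hFval, hFval, G_zero]
    push_cast
    ring
  · intro u hS
    exfalso
    obtain ⟨_, _, _, _, hwlt, _⟩ := hS
    obtain ⟨k, hpre, hk⟩ := hwlt
    have hF0 : F 0 = List.replicate n 0 := by
      rw [hFdef]
      simp only
      rw [hZdef, ← List.replicate_succ']
      congr 1
      omega
    have h0 : wordSeq (F 0) k = 0 := by
      rw [hF0]
      exact getD_replicate_zero n k
    rw [h0] at hk
    omega
  · intro u hS
    intro hFull
    obtain ⟨ku, hku⟩ := st_of_adm hb hS.2.2.2.1
    have hBm1 : ((B-1:ℕ):ℝ) + 1 ≤ β := by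
      have h1 : ((B-1:ℕ):ℝ) = (B:ℝ) - 1 := by
        push_cast [Nat.cast_sub hB1]
        ring
      rw [h1]
      linarith
    have hvalu : val β u = val β (F B) := by
      have h1 := (succ_iff hb (hFst (B-1) hBm1) hku (hFlen (B-1)) hS.2.1).1 hS
      rw [h1, hFval, hFval, G_zero]
      have h2 : ((B-1:ℕ):ℝ) = (B:ℝ) - 1 := by
        push_cast [Nat.cast_sub hB1]
        ring
      rw [h2]
      ring
    have hueq : u = F B := by
      apply cyl_fiber (val_mem_cyl hb hku) _ (by rw [hS.2.1, hFlen B])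
      rw [hvalu]
      exact val_mem_cyl hb hstB
    rw [hueq, full_iff hb, hstB] at hFull
    injection hFull with h
    omega

end S18
namespace S18

lemma maxrun_case1 {β : ℝ} (hb : 1 < β) (hβn : ∀ m : ℕ, β ≠ m) {n M : ℕ}
    (hM : FiniteLen β M) (hMn : M < n) :
    MaxFullRun β n (Int.toNat ⌊β⌋ + dig β 1 (M-1)) := by
  classical
  have hn : 0 < n := by omega
  have hM2 : 2 ≤ M := M_ge_two hb hβn hM
  have hB1 : 1 ≤ Int.toNat ⌊β⌋ := toNat_floor_pos hb
  have hE1 : 1 ≤ dig β 1 (M-1) := epsM_pos hM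
  set B := Int.toNat ⌊β⌋ with hBdef
  set E := dig β 1 (M-1) with hEdef
  have bpos : (0:ℝ) < β := lt_trans one_pos hb
  have bp : (0:ℝ) < β^n := pow_pos bpos n
  have hBle : ((B:ℕ):ℝ) ≤ β := cast_toNat_floor_le hb
  have hBlt : ((B:ℕ):ℝ) < β := cast_toNat_floor_lt hb hβn
  have hBgt : β < ((B:ℕ):ℝ) + 1 := beta_lt_toNat_floor_add_one hb
  have hbgE : β * G β (M-1) = (E:ℝ) := betaG_M hb hM
  set P := List.replicate (n-M) (0:ℕ) ++ epsW β (M-1) with hPdef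
  set Q := List.replicate (n-M-1) (0:ℕ) ++ [1] ++ List.replicate (M-1) (0:ℕ) with hQdef
  have hPlen : P.length = n - 1 := by rw [hPdef]; simp [epsW_length]; omega
  have hQlen : Q.length = n - 1 := by rw [hQdef]; simp; omega
  have hPst : st β P = some (M-1) := by
    rw [hPdef, st_append, st_replicate_zero hb]
    exact st_epsW hb hM (M-1) (le_refl _)
  have hQst : st β Q = some 0 := by
    rw [hQdef, st_append]
    have h1 : st β (List.replicate (n-M-1) 0 ++ [1]) = step β (some 0) 1 := by
      rw [st_concat, st_replicate_zero hb]
    rw [h1]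
    by_cases h2 : (1:ℝ) ≤ β * G β 0 - ((1:ℕ):ℝ)
    · have h3 : step β (some 0) 1 = some 0 := by
        simp only [step, Option.bind_some]; rw [if_pos h2]
      rw [h3]
      exact fold_zeros_zero hb (M-1)
    · have h3 : step β (some 0) 1 = some 1 := by
        simp only [step, Option.bind_some]
        rw [if_neg h2, if_pos (by rw [G_zero, mul_one]; push_cast; linarith)]
      rw [h3]
      exact fold_zero_climb hb hM (M-1) 1 (le_refl _) (by omega) (by omega)
  have hsplit : β^(n-M) * β^(M-1) * β = β^n := by
    rw [← pow_add, ← pow_succ]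
    congr 1
    omega
  have hvalP : val β P = 1/β^(n-M) - (E:ℝ)/β^n := by
    rw [hPdef, val_append hb, val_replicate_zero, List.length_replicate, val_epsW hb]
    have hG : G β (M-1) = (E:ℝ)/β := by
      rw [eq_div_iff (ne_of_gt bpos)]
      linarith [hbgE]
    rw [hG, ← hsplit]
    field_simp
    ring
  have hvalQ : val β Q = 1/β^(n-M) := by
    rw [hQdef, val_append hb, val_concat]
    simp only [val_replicate_zero, List.length_replicate]
    rw [show n - M - 1 + 1 = n - M from by omega]
    push_cast
    ring
  have hQPE : val β Q = val β P + (E:ℝ)/β^n := by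
    rw [hvalP, hvalQ]; ring
  set F : ℕ → List ℕ := fun j => if j < E then P ++ [j] else Q ++ [j - E] with hFdef
  set L := B + E with hLdef
  have hFlen : ∀ j, (F j).length = n := by
    intro j
    rw [hFdef]
    simp only
    split_ifs
    · simp only [List.length_append, List.length_singleton, hPlen]; omega
    · simp only [List.length_append, List.length_singleton, hQlen]; omega
  have hFval : ∀ j, val β (F j) = val β P + (j:ℝ)/β^n := by
    intro j
    rw [hFdef]
    simp only
    split_ifs with hj
    · rw [val_concat, hPlen, show n-1+1 = n from by omega]
    · rw [val_concat, hQlen, show n-1+1 = n from by omega, hQPE]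
      have hcast : ((j - E:ℕ):ℝ) = (j:ℝ) - (E:ℝ) := by
        push_cast [Nat.cast_sub (by omega : E ≤ j)]
        ring
      rw [hcast]
      ring
  have hFst : ∀ j, j < L → st β (F j) = some 0 := by
    intro j hj
    rw [hFdef]
    simp only
    split_ifs with hjE
    · rw [st_concat, hPst]
      simp only [step, Option.bind_some]
      rw [if_pos ?_]
      rw [hbgE]
      have h1 : ((j+1:ℕ):ℝ) ≤ (E:ℝ) := by exact_mod_cast (by omega : j + 1 ≤ E)
      push_cast at h1
      linarith
    · rw [st_concat, hQst]
      simp only [step, Option.bind_some]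
      rw [if_pos ?_]
      rw [G_zero, mul_one]
      have h1 : ((j-E+1:ℕ):ℝ) ≤ (B:ℝ) := by exact_mod_cast (by omega : j - E + 1 ≤ B)
      push_cast at h1
      linarith
  have hFstL : st β (F L) = some 1 := by
    rw [hFdef]
    simp only
    rw [if_neg (by omega)]
    rw [st_concat, hQst]
    simp only [step, Option.bind_some]
    rw [G_zero, mul_one, show L - E = B from by omega]
    rw [if_neg (by push_cast; linarith), if_pos hBlt]
  refine ⟨by omega, F, ?_, ?_, ?_, ?_⟩
  · intro j hj
    exact ⟨hFlen j, adm_of_st hb (hFst j hj), (full_iff hb _).2 (hFst j hj)⟩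
  · intro j hj
    rw [succ_iff hb (hFst j (by omega)) (hFst (j+1) hj) (hFlen j) (hFlen (j+1))]
    rw [hFval (j+1), hFval j, G_zero]
    push_cast
    ring
  · intro u hS hFull
    have hu0 : st β u = some 0 := by rwa [full_iff hb] at hFull
    have hF0st : st β (F 0) = some 0 := hFst 0 (by omega)
    have hadj : val β (F 0) = val β u + 1/β^n := by
      have h1 := (succ_iff hb hu0 hF0st hS.1 (hFlen 0)).1 hS
      rwa [G_zero] at h1
    have hF0take : (F 0).take (n-1) = P := by
      rw [hFdef]
      simp only
      rw [if_pos (by omega)]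
      exact take_concat hPlen
    rcases pred_of_full hb hn hu0 hF0st hS.1 (hFlen 0) hadj with hcase | ⟨hsucc, ku, hku, hbg⟩
    · rw [hF0take] at hcase
      have hvalu : val β u = val β P + (u.getD (n-1) 0 : ℝ)/β^n := by
        rw [val_snoc hb hn hS.1, hcase]
      have hvalF0 : val β (F 0) = val β P := by
        rw [hFval 0]
        norm_num
      rw [hvalF0, hvalu] at hadj
      have h2 : (0:ℝ) ≤ (u.getD (n-1) 0 : ℝ)/β^n := by positivity
      have h3 : (0:ℝ) < 1/β^n := by positivity
      linarith
    · rw [hF0take] at hsucc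
      have hGku : 0 < G β ku := ((struct hb _).2 _ hku).1
      have hkuM : ku = M - 1 := crit_state hb hM hbg hGku
      exact no_two_crit hb hβn hM hsucc (by rw [← hkuM]; exact hku) hPst
  · intro u hS hFull
    obtain ⟨ku, hku⟩ := st_of_adm hb hS.2.2.2.1
    have hLE : ((L-1:ℕ):ℝ) = (L:ℝ) - 1 := by
      push_cast [Nat.cast_sub (by omega : 1 ≤ L)]
      ring
    have hvalu : val β u = val β (F L) := by
      have h1 := (succ_iff hb (hFst (L-1) (by omega)) hku (hFlen (L-1)) hS.2.1).1 hS
      rw [h1, hFval (L-1), hFval L, G_zero, hLE]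
      ring
    have hueq : u = F L := by
      apply cyl_fiber (val_mem_cyl hb hku) _ (by rw [hS.2.1, hFlen L])
      rw [hvalu]
      exact val_mem_cyl hb hFstL
    rw [hueq, full_iff hb, hFstL] at hFull
    injection hFull with h
    omega

end S18
/-- the maximal length of a run of full words is ⌊β⌋ + ε_M when
ε(1,β) is finite with length M < n, and ⌊β⌋ otherwise. -/
theorem stmt18 (β : ℝ) (hβ : 1 < β) (hβn : ∀ m : ℕ, β ≠ m) (n : ℕ) (hn : 0 < n) :
    (∀ M, FiniteLen β M → M < n →
      IsGreatest {l | MaxFullRun β n l} (Int.toNat ⌊β⌋ + dig β 1 (M-1))) ∧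
    (((¬ ∃ M, FiniteLen β M) ∨ (∃ M, FiniteLen β M ∧ n ≤ M)) →
      IsGreatest {l | MaxFullRun β n l} (Int.toNat ⌊β⌋)) := by
  constructor
  · intro M hM hMn
    constructor
    · exact S18.maxrun_case1 hβ hβn hM hMn
    · intro l hl
      obtain ⟨hl0, f, hf, hchain, _, _⟩ := hl
      rcases S18.run_bound hβ hβn hn hf hchain with h | ⟨M2, hM2, hM2n, hle⟩
      · have h2 : Int.toNat ⌊β⌋ ≤ Int.toNat ⌊β⌋ + dig β 1 (M-1) := Nat.le_add_right _ _
        omega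
      · have hMM : M2 = M := S18.finite_unique hM2 hM
        rw [hMM] at hle
        exact hle
  · intro hcase
    constructor
    · exact S18.maxrun_bottom hβ hβn hn
    · intro l hl
      obtain ⟨hl0, f, hf, hchain, _, _⟩ := hl
      rcases S18.run_bound hβ hβn hn hf hchain with h | ⟨M2, hM2, hM2n, hle⟩
      · exact h
      · exfalso
        rcases hcase with h1 | ⟨M, hM, hnM⟩
        · exact h1 ⟨M2, hM2⟩
        · have := S18.finite_unique hM2 hM
          omega
end

section
/- Let 1 < β < 2 with β ∉ ℕ, let {nᵢ} be the nonzero sequence of β, and suppose n < n₂ (where n₂ is the position of the second nonzero digit of ε(1,β)). Then Σ_β^n consists exactly of the n + 1 words 0^n, 0^{n−1}1, 0^{n−2}10, …, 10^{n−1} in increasing lexicographic order; 0^n is full and all other n words are non-full, so the set of lengths of maximal runs of non-full words is N_β^n = {n}. -/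
section Aux
variable {β : ℝ}

lemma Tb_eq_fract (x : ℝ) : Tb β x = Int.fract (β * x) := rfl

lemma Tb_mem (x : ℝ) : Tb β x ∈ Set.Ico (0:ℝ) 1 :=
  ⟨Int.fract_nonneg _, Int.fract_lt_one _⟩

lemma iter_mem {x : ℝ} (hx : x ∈ Set.Ico (0:ℝ) 1) (i : ℕ) :
    (Tb β)^[i] x ∈ Set.Ico (0:ℝ) 1 := by
  cases i with
  | zero => exact hx
  | succ i => rw [Function.iterate_succ_apply']; exact Tb_mem _

lemma Tb_eq_self {y : ℝ} (h0 : 0 ≤ β * y) (h1 : β * y < 1) : Tb β y = β * y := by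
  rw [Tb_eq_fract]; exact Int.fract_eq_self.mpr ⟨h0, h1⟩

lemma dig_eq_zero {x : ℝ} {i : ℕ} (h0 : 0 ≤ β * (Tb β)^[i] x)
    (h1 : β * (Tb β)^[i] x < 1) : dig β x i = 0 := by
  unfold dig
  rw [Int.floor_eq_zero_iff.mpr ⟨h0, h1⟩]
  rfl

lemma one_le_of_dig_ne {x : ℝ} {i : ℕ} (h : dig β x i ≠ 0) :
    1 ≤ β * (Tb β)^[i] x := by
  unfold dig at h
  rw [Ne, Int.toNat_eq_zero, not_le] at h
  have h1 : (1:ℤ) ≤ ⌊β * (Tb β)^[i] x⌋ := by omega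
  simpa using Int.le_floor.mp h1

lemma dig_le_one (hb1 : 0 < β) (h2 : β < 2) {x : ℝ} (hx : x ∈ Set.Ico (0:ℝ) 1) (i : ℕ) :
    dig β x i ≤ 1 := by
  unfold dig
  have h := iter_mem (β := β) hx i
  have hlt : β * (Tb β)^[i] x < 2 := by nlinarith [h.1, h.2]
  have h1 : ⌊β * (Tb β)^[i] x⌋ < 2 := by
    have : ((⌊β * (Tb β)^[i] x⌋ : ℝ)) ≤ β * (Tb β)^[i] x := Int.floor_le _
    exact_mod_cast lt_of_le_of_lt this hlt
  omega

lemma dig_eq_one (hb1 : 0 < β) (h2 : β < 2) {x : ℝ} (hx : x ∈ Set.Ico (0:ℝ) 1) {i : ℕ}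
    (h : dig β x i ≠ 0) : dig β x i = 1 :=
  le_antisymm (dig_le_one hb1 h2 hx i) (Nat.one_le_iff_ne_zero.mpr h)

lemma iter_succ_of_dig_zero {x : ℝ} {i : ℕ} (hnn : 0 ≤ β * (Tb β)^[i] x)
    (h : dig β x i = 0) : (Tb β)^[i+1] x = β * (Tb β)^[i] x := by
  rw [Function.iterate_succ_apply']
  apply Tb_eq_self hnn
  unfold dig at h
  rw [Int.toNat_eq_zero] at h
  by_contra hc
  push_neg at hc
  have : (1:ℤ) ≤ ⌊β * (Tb β)^[i] x⌋ := Int.le_floor.mpr (by exact_mod_cast hc)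
  omega

lemma iter_digzero (hb : 0 < β) {x : ℝ} (hx : 0 ≤ x) {m : ℕ}
    (hd : ∀ i, i < m → dig β x i = 0) : ∀ i, i ≤ m → (Tb β)^[i] x = β^i * x := by
  intro i hi
  induction i with
  | zero => simp
  | succ i ih =>
    have hii : (Tb β)^[i] x = β^i * x := ih (by omega)
    have hnn : 0 ≤ β * (Tb β)^[i] x := by
      rw [hii]; positivity
    rw [iter_succ_of_dig_zero hnn (hd i (by omega)), hii]; ring

lemma digzero_of_small (hb : 1 ≤ β) {x : ℝ} (hx : 0 ≤ x) {m : ℕ}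
    (hm : β^m * x < 1) : (∀ i, i < m → dig β x i = 0) ∧ ∀ i, i ≤ m → (Tb β)^[i] x = β^i * x := by
  have hb0 : 0 < β := lt_of_lt_of_le one_pos hb
  have key : ∀ i, i ≤ m → (Tb β)^[i] x = β^i * x ∧ (i < m → dig β x i = 0) := by
    intro i hi
    induction i with
    | zero =>
      refine ⟨by simp, fun h0 => ?_⟩
      have : β * x ≤ β^m * x := by
        have : β ^ 1 ≤ β ^ m := pow_le_pow_right₀ hb (by omega)
        nlinarith
      exact dig_eq_zero (by simp; positivity) (by simpa using lt_of_le_of_lt this hm)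
    | succ i ih =>
      obtain ⟨hit, hdz⟩ := ih (by omega)
      have hdi : dig β x i = 0 := hdz (by omega)
      have hnn : 0 ≤ β * (Tb β)^[i] x := by rw [hit]; positivity
      have hsucc : (Tb β)^[i+1] x = β^(i+1) * x := by
        rw [iter_succ_of_dig_zero hnn hdi, hit]; ring
      refine ⟨hsucc, fun hlt => ?_⟩
      have hle : β^(i+2) * x ≤ β^m * x := by
        have : β ^ (i+2) ≤ β ^ m := pow_le_pow_right₀ hb (by omega)
        nlinarith
      apply dig_eq_zero
      · rw [hsucc]; positivity
      · rw [hsucc]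
        calc β * (β^(i+1) * x) = β^(i+2) * x := by ring
          _ ≤ β^m * x := hle
          _ < 1 := hm
  exact ⟨fun i hi => (key i (by omega)).2 hi, fun i hi => (key i hi).1⟩

lemma iter_zero : ∀ i, (Tb β)^[i] (0:ℝ) = 0 := by
  intro i
  induction i with
  | zero => rfl
  | succ i ih => rw [Function.iterate_succ_apply', ih, Tb_eq_fract, mul_zero, Int.fract_zero]

end Aux
section Aux2
variable {β : ℝ} {n : ℕ}

lemma Texp (h1 : 1 < β) (h2 : β < 2)
    (hn2 : ∀ k, 2 ≤ k → k ≤ n → dig β 1 (k-1) = 0) :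
    ∀ t, 1 ≤ t → t ≤ n → (Tb β)^[t] (1:ℝ) = β^(t-1) * (β-1) := by
  intro t
  induction t with
  | zero => omega
  | succ t ih =>
    intro _ htn
    rcases Nat.eq_zero_or_pos t with rfl | ht
    · show Tb β 1 = β ^ (0+1-1) * (β-1)
      rw [Tb_eq_fract, mul_one]; simp only [Int.fract]
      have : ⌊β⌋ = 1 := by
        rw [Int.floor_eq_iff]
        constructor
        · exact_mod_cast h1.le
        · push_cast; linarith
      rw [this]; norm_num
    · have hit := ih ht (by omega)
      have hd : dig β 1 t = 0 := by
        exact hn2 (t+1) (by omega) (by omega)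
      have hnn : 0 ≤ β * (Tb β)^[t] (1:ℝ) := by
        rw [hit]
        have h3 := mul_pos (show (0:ℝ) < β by linarith)
          (mul_pos (pow_pos (show (0:ℝ) < β by linarith) (t-1)) (show (0:ℝ) < β - 1 by linarith))
        linarith
      rw [iter_succ_of_dig_zero hnn hd, hit]
      have : t + 1 - 1 = (t - 1) + 1 := by omega
      rw [this, pow_succ]; ring

lemma powLtAux (h1 : 1 < β) (h2 : β < 2) (hn : 0 < n)
    (hn2 : ∀ k, 2 ≤ k → k ≤ n → dig β 1 (k-1) = 0) :
    ∀ t, t ≤ n - 1 → β^t * (β-1) < 1 := by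
  intro t ht
  rcases Nat.eq_zero_or_pos t with rfl | htp
  · simpa using by linarith
  · have hit := Texp h1 h2 hn2 t htp (by omega)
    have hd : dig β 1 t = 0 := by
      exact hn2 (t+1) (by omega) (by omega)
    have hnn : 0 ≤ β * (Tb β)^[t] (1:ℝ) := by
      rw [hit]
      have h3 := mul_pos (show (0:ℝ) < β by linarith)
        (mul_pos (pow_pos (show (0:ℝ) < β by linarith) (t-1)) (show (0:ℝ) < β - 1 by linarith))
      linarith
    -- dig = 0 since toNat floor = 0 and nonneg → β * T^t 1 < 1
    unfold dig at hd
    rw [Int.toNat_eq_zero] at hd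
    have hfl : ⌊β * (Tb β)^[t] (1:ℝ)⌋ = 0 := le_antisymm hd (Int.floor_nonneg.mpr hnn)
    have hlt := (Int.floor_eq_zero_iff.mp hfl).2
    rw [hit] at hlt
    have hpow : β^t = β * β^(t-1) := by
      rw [← pow_succ']
      congr 1
      omega
    rw [hpow, mul_assoc]
    exact hlt

lemma no_two_ones (h1 : 1 < β) (h2 : β < 2) (hn : 0 < n)
    (hn2 : ∀ k, 2 ≤ k → k ≤ n → dig β 1 (k-1) = 0)
    {x : ℝ} (hx : x ∈ Set.Ico (0:ℝ) 1) {i i' : ℕ} (hii : i < i') (hi' : i' < n)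
    (d1 : dig β x i ≠ 0) : dig β x i' = 0 := by
  have hb0 : (0:ℝ) < β := by linarith
  have powlt := powLtAux h1 h2 hn hn2
  have hs : 1 ≤ β * (Tb β)^[i] x := one_le_of_dig_ne d1
  have hTi := iter_mem (β := β) hx i
  have hs2 : β * (Tb β)^[i] x < β := by nlinarith [hTi.2]
  -- T^{i+1} x < β - 1
  have hfl : (1:ℝ) ≤ ⌊β * (Tb β)^[i] x⌋ := by
    exact_mod_cast Int.le_floor.mpr (by exact_mod_cast hs)
  have hT1 : (Tb β)^[i+1] x < β - 1 := by
    rw [Function.iterate_succ_apply', Tb_eq_fract]; simp only [Int.fract]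
    linarith
  -- T^{i+1+t} x < β^t (β-1)
  have hchain : ∀ t, (Tb β)^[i+1+t] x < β^t * (β-1) := by
    intro t
    induction t with
    | zero => simpa using hT1
    | succ t ih =>
      have heq : i+1+(t+1) = (i+1+t) + 1 := by omega
      rw [heq, Function.iterate_succ_apply', Tb_eq_fract]
      have hTnn := (iter_mem (β := β) hx (i+1+t)).1
      calc Int.fract (β * (Tb β)^[i+1+t] x) ≤ β * (Tb β)^[i+1+t] x := by
            simp only [Int.fract]
            have : (0:ℝ) ≤ ⌊β * (Tb β)^[i+1+t] x⌋ :=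
              by exact_mod_cast Int.floor_nonneg.mpr (by positivity)
            linarith
        _ < β * (β^t * (β-1)) := by
            apply mul_lt_mul_of_pos_left ih hb0
        _ = β^(t+1) * (β-1) := by ring
  have ht : i' = i + 1 + (i' - i - 1) := by omega
  apply dig_eq_zero
  · exact mul_nonneg hb0.le (iter_mem (β := β) hx i').1
  · rw [ht]
    calc β * (Tb β)^[i+1+(i'-i-1)] x < β * (β^(i'-i-1) * (β-1)) :=
          mul_lt_mul_of_pos_left (hchain _) hb0
      _ = β^(i'-i) * (β-1) := by
          rw [← mul_assoc, ← pow_succ']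
          congr 2
          omega
      _ < 1 := powlt _ (by omega)

end Aux2
section Words

/-- the word 0^{n-1-j} 1 0^j -/
def word (n j : ℕ) : List ℕ := List.replicate (n-1-j) 0 ++ 1 :: List.replicate j 0

lemma word_length {n j : ℕ} (h : j < n) : (word n j).length = n := by
  simp [word]; omega

lemma getD_replicate_zero (b k : ℕ) : (List.replicate b (0:ℕ)).getD k 0 = 0 := by
  simp [List.getD, List.getElem?_replicate]
  split <;> simp

lemma rep_getD (a b i : ℕ) :
    (List.replicate a 0 ++ 1 :: List.replicate b 0).getD i 0 = if i = a then 1 else 0 := by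
  induction a generalizing i with
  | zero =>
    cases i with
    | zero => simp
    | succ k =>
      show (1 :: List.replicate b 0).getD (k+1) 0 = _
      rw [List.getD_cons_succ, getD_replicate_zero]
      simp
  | succ a ih =>
    cases i with
    | zero => simp [List.replicate_succ]
    | succ k =>
      rw [List.replicate_succ, List.cons_append]
      simpa [List.getD] using ih k

lemma word_getD (n j i : ℕ) : (word n j).getD i 0 = if i = n-1-j then 1 else 0 :=
  rep_getD _ _ _

lemma getD_of_lt {w : List ℕ} {i : ℕ} (h : i < w.length) : w[i] = w.getD i 0 :=
  (List.getD_eq_getElem w 0 h).symm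

lemma word_getElem {n j i : ℕ} (h : i < (word n j).length) :
    (word n j)[i] = if i = n-1-j then 1 else 0 := by
  rw [getD_of_lt h, word_getD]

lemma wordSeq_word (n j i : ℕ) : wordSeq (word n j) i = if i = n-1-j then 1 else 0 :=
  word_getD n j i

lemma wordSeq_zero (n i : ℕ) : wordSeq (List.replicate n 0) i = 0 := by
  unfold wordSeq
  cases Nat.lt_or_ge i n with
  | inl h => rw [← getD_of_lt (by simpa using h)]; simp
  | inr h => rw [List.getD_eq_default]; simpa using h

lemma seqLt_irrefl (u : ℕ → ℕ) : ¬ seqLt u u := by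
  rintro ⟨k, _, hk⟩; omega

lemma seqLt_asymm {u v : ℕ → ℕ} (h1 : seqLt u v) (h2 : seqLt v u) : False := by
  obtain ⟨k1, ha1, hb1⟩ := h1
  obtain ⟨k2, ha2, hb2⟩ := h2
  rcases lt_trichotomy k1 k2 with h | h | h
  · have := ha2 k1 h; omega
  · subst h; omega
  · have := ha1 k2 h; omega

lemma wlt_word {n i j : ℕ} (hij : i < j) (hj : j < n) : wlt (word n i) (word n j) := by
  refine ⟨n-1-j, fun t ht => ?_, ?_⟩
  · rw [wordSeq_word, wordSeq_word, if_neg (by omega), if_neg (by omega)]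
  · rw [wordSeq_word, wordSeq_word, if_neg (by omega), if_pos rfl]; omega

lemma not_wlt_zero {n : ℕ} (u : List ℕ) : ¬ wlt u (List.replicate n 0) := by
  rintro ⟨k, _, hk⟩
  rw [wordSeq_zero] at hk
  omega

lemma wlt_word_lt {n i j : ℕ} (hi : i < n) (hj : j < n) (h : wlt (word n i) (word n j)) :
    i < j := by
  by_contra hc
  push_neg at hc
  rcases Nat.lt_or_ge j i with h' | h'
  · exact seqLt_asymm h (wlt_word h' hi)
  · have : i = j := by omega
    subst this
    exact seqLt_irrefl _ h

end Words
section Adm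
variable {β : ℝ} {n : ℕ}

lemma adm_zero (n : ℕ) : Adm β (List.replicate n 0) := by
  refine ⟨0, ⟨le_refl _, one_pos⟩, fun i h => ?_⟩
  rw [List.getElem_replicate]
  unfold dig
  rw [iter_zero, mul_zero]
  simp

lemma adm_word (h1 : 1 < β) {j : ℕ} (hj : j < n) : Adm β (word n j) := by
  have hb0 : (0:ℝ) < β := by linarith
  set a := n - 1 - j with ha
  set x : ℝ := (β^(a+1))⁻¹ with hxd
  have hpow : (0:ℝ) < β^(a+1) := pow_pos hb0 _
  have hx0 : 0 < x := by positivity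
  have hx1 : x < 1 := by
    rw [hxd, inv_lt_one_iff₀]
    right
    exact one_lt_pow₀ h1 (by omega)
  have hsmall : β^a * x < 1 := by
    rw [hxd]
    rw [mul_inv_lt_iff₀ hpow, one_mul, pow_succ]
    nlinarith [pow_pos hb0 a]
  obtain ⟨hdz, hit⟩ := digzero_of_small h1.le hx0.le hsmall
  have hTa : (Tb β)^[a] x = β^a * x := hit a le_rfl
  have hone : β * (Tb β)^[a] x = 1 := by
    rw [hTa, ← mul_assoc, ← pow_succ', hxd]
    exact mul_inv_cancel₀ (ne_of_gt hpow)
  have hda : dig β x a = 1 := by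
    unfold dig
    rw [hone]
    simp
  have hTa1 : (Tb β)^[a+1] x = 0 := by
    rw [Function.iterate_succ_apply', Tb_eq_fract, hone]
    exact Int.fract_one
  have hafter : ∀ t, (Tb β)^[a+1+t] x = 0 := by
    intro t
    rw [add_comm (a+1) t, Function.iterate_add_apply, hTa1, iter_zero]
  refine ⟨x, ⟨hx0.le, hx1⟩, fun i h => ?_⟩
  rw [word_getElem h]
  rcases lt_trichotomy i a with hia | rfl | hia
  · rw [if_neg (by omega), hdz i hia]
  · rw [if_pos rfl, hda]
  · rw [if_neg (by omega)]
    have : i = a + 1 + (i - a - 1) := by omega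
    rw [this]
    unfold dig
    rw [hafter, mul_zero]
    simp

lemma adm_classify (h1 : 1 < β) (h2 : β < 2) (hn : 0 < n)
    (hn2 : ∀ k, 2 ≤ k → k ≤ n → dig β 1 (k-1) = 0)
    {w : List ℕ} (hlen : w.length = n) (hadm : Adm β w) :
    w = List.replicate n 0 ∨ ∃ j, j < n ∧ w = word n j := by
  have hb0 : (0:ℝ) < β := by linarith
  obtain ⟨x, hx, hd⟩ := hadm
  by_cases hz : ∀ i (h : i < w.length), w[i] = 0
  · left
    apply List.ext_getElem (by simpa using hlen)
    intro i hi hi'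
    rw [hz i hi, List.getElem_replicate]
  · right
    push_neg at hz
    obtain ⟨m, hm, hmne⟩ := hz
    have hmn : m < n := by omega
    have hdm : dig β x m ≠ 0 := by rw [← hd m hm]; exact hmne
    have hwm : w[m]'hm = 1 := by
      rw [hd m hm]
      exact dig_eq_one hb0 h2 hx hdm
    have hother : ∀ i (h : i < w.length), i ≠ m → w[i] = 0 := by
      intro i hi hne
      rcases Nat.lt_or_ge i m with h' | h'
      · by_contra hc
        have : dig β x i ≠ 0 := by rw [← hd i hi]; exact hc
        have := no_two_ones h1 h2 hn hn2 hx h' hmn this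
        exact hdm this
      · have h'' : m < i := by omega
        rw [hd i hi]
        exact no_two_ones h1 h2 hn hn2 hx h'' (by omega) hdm
    refine ⟨n - 1 - m, by omega, ?_⟩
    have hwl : (word n (n-1-m)).length = n := word_length (by omega)
    apply List.ext_getElem (by omega)
    intro i hi hi'
    rw [word_getElem hi']
    have ham : n - 1 - (n - 1 - m) = m := by omega
    rw [ham]
    rcases eq_or_ne i m with rfl | hne
    · rw [if_pos rfl]; exact hwm
    · rw [if_neg hne]; exact hother i hi hne

end Adm
section FullSec
variable {β : ℝ} {n : ℕ}

lemma full_zero (h1 : 1 < β) (hn : 0 < n) : Full β (List.replicate n 0) := by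
  have hb0 : (0:ℝ) < β := by linarith
  unfold Full
  apply Set.Subset.antisymm
  · rintro y ⟨x, hx, rfl⟩
    simpa using iter_mem (β := β) hx.1 _
  · intro y hy
    set x : ℝ := y / β^n with hxd
    have hpow : (0:ℝ) < β^n := pow_pos hb0 _
    have hx0 : 0 ≤ x := div_nonneg hy.1 hpow.le
    have hxe : β^n * x = y := by
      rw [hxd]; field_simp
    have hsmall : β^n * x < 1 := by rw [hxe]; exact hy.2
    obtain ⟨hdz, hit⟩ := digzero_of_small h1.le hx0 hsmall
    have hx1 : x < 1 := by
      have h1n : (1:ℝ) ≤ β^n := one_le_pow₀ h1.le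
      nlinarith
    refine ⟨x, ⟨⟨hx0, hx1⟩, fun i h => ?_⟩, ?_⟩
    · rw [List.getElem_replicate]
      exact (hdz i (by simpa using h)).symm
    · simp only [List.length_replicate]
      rw [hit n le_rfl, hxe]

lemma not_full_word (h1 : 1 < β) (h2 : β < 2) (hn : 0 < n)
    (hn2 : ∀ k, 2 ≤ k → k ≤ n → dig β 1 (k-1) = 0)
    {j : ℕ} (hj : j < n) : ¬ Full β (word n j) := by
  have hb0 : (0:ℝ) < β := by linarith
  intro hF
  set a := n - 1 - j with had
  have hwl : (word n j).length = n := word_length hj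
  set y : ℝ := β^j * (β - 1) with hyd
  have hy : y ∈ Set.Ico (0:ℝ) 1 := by
    constructor
    · have := pow_pos hb0 j; nlinarith
    · exact powLtAux h1 h2 hn hn2 j (by omega)
  unfold Full at hF
  rw [hwl] at hF
  have : y ∈ (Tb β)^[n] '' cyl β (word n j) := hF ▸ hy
  obtain ⟨x, hxc, hTx⟩ := this
  obtain ⟨hx, hdig⟩ := hxc
  -- digits of x
  have hdigs : ∀ i (h : i < n), dig β x i = if i = a then 1 else 0 := by
    intro i hi
    rw [← hdig i (by omega), word_getElem (by omega)]
  have hdz : ∀ i, i < a → dig β x i = 0 := by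
    intro i hi
    rw [hdigs i (by omega), if_neg (by omega)]
  have hTa : (Tb β)^[a] x = β^a * x := iter_digzero hb0 hx.1 hdz a le_rfl
  have hTalt : (Tb β)^[a] x < 1 := (iter_mem (β := β) hx a).2
  have hda : dig β x a ≠ 0 := by rw [hdigs a (by omega), if_pos rfl]; omega
  have hge : 1 ≤ β * (Tb β)^[a] x := one_le_of_dig_ne hda
  have hlt2 : β * (Tb β)^[a] x < β := by nlinarith
  have hT1 : (Tb β)^[a+1] x < β - 1 := by
    rw [Function.iterate_succ_apply', Tb_eq_fract]
    simp only [Int.fract]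
    have : (1:ℝ) ≤ ⌊β * (Tb β)^[a] x⌋ := by
      exact_mod_cast Int.le_floor.mpr (by exact_mod_cast hge)
    linarith
  set z : ℝ := (Tb β)^[a+1] x with hzd
  have hz : z ∈ Set.Ico (0:ℝ) 1 := iter_mem hx (a+1)
  have hzdz : ∀ t, t < j → dig β z t = 0 := by
    intro t ht
    have heq : (Tb β)^[t] z = (Tb β)^[a+1+t] x := by
      rw [hzd, ← Function.iterate_add_apply, add_comm t (a+1)]
    unfold dig
    rw [heq]
    have : dig β x (a+1+t) = 0 := by
      rw [hdigs (a+1+t) (by omega), if_neg (by omega)]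
    unfold dig at this
    exact this
  have hTz : (Tb β)^[j] z = β^j * z := iter_digzero hb0 hz.1 hzdz j le_rfl
  have hTn : (Tb β)^[n] x = β^j * z := by
    have hne : n = j + (a + 1) := by omega
    rw [hne, Function.iterate_add_apply, ← hzd, hTz]
  rw [hTn] at hTx
  have : β^j * z < y := by
    rw [hyd]
    have := pow_pos hb0 j
    nlinarith
  rw [hTx] at this
  exact lt_irrefl y this

end FullSec
section Succ
variable {β : ℝ} {n : ℕ}

lemma succ_words (h1 : 1 < β) (h2 : β < 2) (hn : 0 < n)
    (hn2 : ∀ k, 2 ≤ k → k ≤ n → dig β 1 (k-1) = 0)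
    {m : ℕ} (hm : m + 1 < n) : SuccIn β n (word n m) (word n (m+1)) := by
  refine ⟨word_length (by omega), word_length hm, adm_word h1 (by omega), adm_word h1 hm,
    wlt_word (Nat.lt_succ_self m) hm, ?_⟩
  rintro ⟨z, hzl, hza, hz1, hz2⟩
  rcases adm_classify h1 h2 hn hn2 hzl hza with rfl | ⟨k, hk, rfl⟩
  · exact not_wlt_zero _ hz1
  · have hk1 := wlt_word_lt (by omega) hk hz1
    have hk2 := wlt_word_lt hk hm hz2
    omega

end Succ


/-- for 1 < β < 2 with n < n₂, Σ_β^n consists of 0^n and the n words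
0^{n−1−j}10^j (j < n) in increasing lexicographic order; 0^n is full, the others
are non-full, and N_β^n = {n}. -/
theorem stmt19 (β : ℝ) (h1 : 1 < β) (h2 : β < 2) (n : ℕ) (hn : 0 < n)
    (hn2 : ∀ k, 2 ≤ k → k ≤ n → dig β 1 (k-1) = 0) :
    ({w : List ℕ | w.length = n ∧ Adm β w} =
      {List.replicate n 0} ∪
        {w | ∃ j, j < n ∧ w = List.replicate (n-1-j) 0 ++ 1 :: List.replicate j 0}) ∧
    (∀ i j, i < j → j < n →
      wlt (List.replicate (n-1-i) 0 ++ 1 :: List.replicate i 0)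
          (List.replicate (n-1-j) 0 ++ 1 :: List.replicate j 0)) ∧
    Full β (List.replicate n 0) ∧
    (∀ j, j < n → ¬ Full β (List.replicate (n-1-j) 0 ++ 1 :: List.replicate j 0)) ∧
    {l | MaxNonFullRun β n l} = {n} := by
  refine ⟨?_, ?_, ?_, ?_, ?_⟩
  · ext w
    simp only [Set.mem_setOf_eq, Set.mem_union, Set.mem_singleton_iff]
    constructor
    · rintro ⟨hlen, hadm⟩
      rcases adm_classify h1 h2 hn hn2 hlen hadm with h | ⟨j, hj, h⟩
      · exact Or.inl h
      · exact Or.inr ⟨j, hj, h⟩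
    · rintro (rfl | ⟨j, hj, rfl⟩)
      · exact ⟨by simp, adm_zero n⟩
      · exact ⟨word_length hj, adm_word h1 hj⟩
  · intro i j hij hj
    exact wlt_word hij hj
  · exact full_zero h1 hn
  · intro j hj
    exact not_full_word h1 h2 hn hn2 hj
  · ext l
    simp only [Set.mem_setOf_eq, Set.mem_singleton_iff]
    constructor
    · rintro ⟨hl, f, hprops, hsucc, hleft, hright⟩
      have classify : ∀ j, j < l → ∃ m, m < n ∧ f j = word n m := by
        intro j hj
        obtain ⟨hlen, hadm, hnf⟩ := hprops j hj
        rcases adm_classify h1 h2 hn hn2 hlen hadm with h | ⟨m, hm, h⟩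
        · exact absurd (by rw [h]; exact full_zero h1 hn) hnf
        · exact ⟨m, hm, h⟩
      have claim : ∀ j, j < l → j < n ∧ f j = word n j := by
        intro j
        induction j with
        | zero =>
          intro hj
          obtain ⟨m, hm, hfm⟩ := classify 0 hj
          rcases Nat.eq_zero_or_pos m with rfl | hmp
          · exact ⟨hn, hfm⟩
          · exfalso
            have hsu : SuccIn β n (word n (m-1)) (f 0) := by
              rw [hfm]
              have := succ_words h1 h2 hn hn2 (m := m-1) (by omega)
              rwa [show m - 1 + 1 = m by omega] at this
            exact not_full_word h1 h2 hn hn2 (by omega : m - 1 < n) (hleft _ hsu)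
        | succ j ih =>
          intro hj
          obtain ⟨hjn, hfj⟩ := ih (by omega)
          obtain ⟨m, hm, hfm⟩ := classify (j+1) hj
          have hs := hsucc j hj
          rw [hfj, hfm] at hs
          obtain ⟨_, _, _, _, hwlt, hnb⟩ := hs
          have hjm : j < m := wlt_word_lt hjn hm hwlt
          rcases Nat.lt_or_ge (j+1) m with hlt | hge
          · exact absurd ⟨word n (j+1), word_length (by omega), adm_word h1 (by omega),
              wlt_word (by omega) (by omega), wlt_word hlt hm⟩ hnb
          · have hmj : m = j + 1 := by omega
            subst hmj
            exact ⟨hm, hfm⟩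
      obtain ⟨hln, hfl⟩ := claim (l-1) (by omega)
      by_contra hne
      have hlt : l - 1 + 1 < n := by omega
      have hsu : SuccIn β n (f (l-1)) (word n (l-1+1)) := by
        rw [hfl]; exact succ_words h1 h2 hn hn2 hlt
      exact not_full_word h1 h2 hn hn2 (by omega : l-1+1 < n) (hright _ hsu)
    · intro hleq
      rw [hleq]
      refine ⟨hn, fun j => word n j, ?_, ?_, ?_, ?_⟩
      · intro j hj
        exact ⟨word_length hj, adm_word h1 hj, not_full_word h1 h2 hn hn2 hj⟩
      · intro j hj
        exact succ_words h1 h2 hn hn2 hj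
      · intro u hsu
        obtain ⟨hul, _, huadm, _, hwlt, _⟩ := hsu
        rcases adm_classify h1 h2 hn hn2 hul huadm with rfl | ⟨k, hk, rfl⟩
        · exact full_zero h1 hn
        · have := wlt_word_lt hk hn hwlt
          omega
      · intro u hsu
        obtain ⟨_, hul, _, huadm, hwlt, _⟩ := hsu
        exfalso
        rcases adm_classify h1 h2 hn hn2 hul huadm with rfl | ⟨k, hk, rfl⟩
        · exact not_wlt_zero _ hwlt
        · have := wlt_word_lt (by omega : n-1 < n) hk hwlt
          omega
end
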